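/- arXiv:2110.15940 — 5 statements merged into one kernel-verified Lean document; each statement's English description precedes it below -/
import Mathlib

section
/- Let k, N be natural numbers with 1 ≤ k < N and set n := N − k. In the exterior algebra Λ(V) over ℝ, the element (tr Φ)^{kn} equals (kn)! · T, where T is the top-degree generator. (This computes the fermionic representation of ∫_{G(k,N)} (σ₁^∨)^{kN−k²} and yields the value (kN−k²)! · (∏_{j=0}^{k−1} j!)/(∏_{j=N−k}^{N−1} j!).) -/
noncomputable section

/-- The real vector space with basis `ψ_s^j` (inl) and `ψ̄_s^j` (inr),
    `1 ≤ s ≤ n`, `1 ≤ j ≤ k`. -/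
abbrev V (k n : ℕ) : Type := ((Fin n × Fin k) ⊕ (Fin n × Fin k)) → ℝ

/-- The fermionic variable `ψ_s^j` as a degree-1 element of the exterior algebra. -/
def ψ (k n : ℕ) (s : Fin n) (j : Fin k) : ExteriorAlgebra ℝ (V k n) :=
  ExteriorAlgebra.ι ℝ (Pi.single (Sum.inl (s, j)) (1 : ℝ))

/-- The fermionic variable `ψ̄_s^j` as a degree-1 element of the exterior algebra. -/
def ψb (k n : ℕ) (s : Fin n) (j : Fin k) : ExteriorAlgebra ℝ (V k n) :=
  ExteriorAlgebra.ι ℝ (Pi.single (Sum.inr (s, j)) (1 : ℝ))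

/-- `ω^{ij} = ∑_{s=1}^n ψ_s^i ∧ ψ̄_s^j`. -/
def ω (k n : ℕ) (i j : Fin k) : ExteriorAlgebra ℝ (V k n) :=
  ∑ s : Fin n, ψ k n s i * ψb k n s j

/-- `tr Φ = ∑_{i=1}^k ω^{ii}`. -/
def trPhi (k n : ℕ) : ExteriorAlgebra ℝ (V k n) :=
  ∑ i : Fin k, ω k n i i

/-- `tr(Φ²) = ∑_{i,j=1}^k ω^{ij} ∧ ω^{ji}`. -/
def trPhi2 (k n : ℕ) : ExteriorAlgebra ℝ (V k n) :=
  ∑ i : Fin k, ∑ j : Fin k, ω k n i j * ω k n j i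

/-- The top-degree generator `T = ∧_{s=1}^n (ψ_s^1 ∧ ψ̄_s^1 ∧ ⋯ ∧ ψ_s^k ∧ ψ̄_s^k)`. -/
def T (k n : ℕ) : ExteriorAlgebra ℝ (V k n) :=
  ((List.finRange n).map (fun s =>
    ((List.finRange k).map (fun j => ψ k n s j * ψb k n s j)).prod)).prod

namespace TrPhiAux

variable {R : Type*} {M : Type*} [CommRing R] [AddCommGroup M] [Module R M]

open ExteriorAlgebra

theorem swap (u v : M) : ι R u * ι R v = -(ι R v * ι R u) :=
  eq_neg_of_add_eq_zero_left (ι_add_mul_swap u v)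

theorem swap' (u v : M) (x : ExteriorAlgebra R M) :
    ι R u * (ι R v * x) = -(ι R v * (ι R u * x)) := by
  rw [← mul_assoc, ← mul_assoc, swap u v, neg_mul]

theorem comm4 (a b c d : M) :
    Commute (ι R a * ι R b) (ι R c * ι R d) := by
  show _ = _
  calc ι R a * ι R b * (ι R c * ι R d)
      = ι R a * (ι R b * (ι R c * ι R d)) := by rw [mul_assoc]
    _ = ι R a * -(ι R c * (ι R b * ι R d)) := by rw [swap' b c]
    _ = -(ι R a * (ι R c * (ι R b * ι R d))) := by rw [mul_neg]
    _ = -(-(ι R c * (ι R a * (ι R b * ι R d)))) := by rw [swap' a c]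
    _ = ι R c * (ι R a * (ι R b * ι R d)) := neg_neg _
    _ = ι R c * (ι R a * -(ι R d * ι R b)) := by rw [swap b d]
    _ = ι R c * -(ι R a * (ι R d * ι R b)) := by rw [mul_neg]
    _ = ι R c * -(-(ι R d * (ι R a * ι R b))) := by rw [swap' a d]
    _ = ι R c * (ι R d * (ι R a * ι R b)) := by rw [neg_neg]
    _ = ι R c * ι R d * (ι R a * ι R b) := by rw [mul_assoc]

theorem sq4 (a b : M) : (ι R a * ι R b) * (ι R a * ι R b) = 0 := by
  calc ι R a * ι R b * (ι R a * ι R b)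
      = ι R a * (ι R b * (ι R a * ι R b)) := by rw [mul_assoc]
    _ = ι R a * -(ι R a * (ι R b * ι R b)) := by rw [swap' b a]
    _ = 0 := by rw [ι_sq_zero, mul_zero, neg_zero, mul_zero]

variable {A : Type*} [Ring A]

theorem mem_mul_prod (L : List A) (hc : ∀ x ∈ L, ∀ y ∈ L, Commute x y)
    (hz : ∀ x ∈ L, x * x = 0) (b : A) (hb : b ∈ L) : b * L.prod = 0 := by
  induction L with
  | nil => simp at hb
  | cons c M ih =>
    rw [List.prod_cons]
    rcases List.mem_cons.mp hb with rfl | hbM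
    · rw [← mul_assoc, hz b (List.mem_cons_self), zero_mul]
    · rw [← mul_assoc, (hc b hb c (List.mem_cons_self)).eq, mul_assoc,
        ih (fun x hx y hy => hc x (List.mem_cons_of_mem _ hx) y (List.mem_cons_of_mem _ hy))
          (fun x hx => hz x (List.mem_cons_of_mem _ hx)) hbM, mul_zero]

theorem list_key (L : List A) (hc : ∀ x ∈ L, ∀ y ∈ L, Commute x y)
    (hz : ∀ x ∈ L, x * x = 0) :
    L.sum ^ L.length = L.length.factorial • L.prod := by
  induction L with
  | nil => simp
  | cons x M ih =>
    have hcM : ∀ a ∈ M, ∀ b ∈ M, Commute a b :=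
      fun a ha b hb => hc a (List.mem_cons_of_mem _ ha) b (List.mem_cons_of_mem _ hb)
    have hzM : ∀ a ∈ M, a * a = 0 := fun a ha => hz a (List.mem_cons_of_mem _ ha)
    have hIH := ih hcM hzM
    set m := M.length with hm
    have hx2 : x * x = 0 := hz x (List.mem_cons_self)
    have hxt : Commute x M.sum := Commute.list_sum_right _ _
      (fun y hy => hc x (List.mem_cons_self) y (List.mem_cons_of_mem _ hy))
    -- M.sum ^ (m+1) = 0
    have hsum_mul : M.sum * M.prod = 0 := by
      have : ∀ (L' : List A), (∀ b ∈ L', b ∈ M) → L'.sum * M.prod = 0 := by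
        intro L' hL'
        induction L' with
        | nil => simp
        | cons c M' ih' =>
          rw [List.sum_cons, add_mul,
            mem_mul_prod M hcM hzM c (hL' c (List.mem_cons_self)),
            ih' (fun b hb => hL' b (List.mem_cons_of_mem _ hb)), add_zero]
      exact this M (fun b hb => hb)
    have htz : M.sum ^ (m + 1) = 0 := by
      rw [pow_succ', hIH, mul_smul_comm, hsum_mul, smul_zero]
    rw [List.sum_cons, List.length_cons, List.prod_cons]
    rw [hxt.add_pow]
    rw [Finset.sum_eq_single 1]
    · rw [pow_one, Nat.add_sub_cancel, hIH, Nat.choose_one_right,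
        mul_smul_comm, smul_mul_assoc, ← nsmul_eq_mul', smul_smul,
        Nat.factorial_succ, Nat.mul_comm]
    · intro j hj hj1
      rcases Nat.lt_or_ge j 2 with h2 | h2
      · interval_cases j
        · rw [pow_zero, one_mul, Nat.sub_zero, htz, zero_mul]
        · exact absurd rfl hj1
      · obtain ⟨j', rfl⟩ : ∃ j', j = j' + 2 := ⟨j - 2, by omega⟩
        have : x ^ (j' + 2) = 0 := by
          rw [pow_succ, pow_succ, mul_assoc, hx2, mul_zero]
        rw [this, zero_mul, zero_mul]
    · intro h
      exact absurd (Finset.mem_range.mpr (by omega)) h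

end TrPhiAux

/-- `(tr Φ)^{kn} = (kn)! · T`, the fermionic representation of
`∫_{G(k,N)} (σ₁^∨)^{kN−k²} = (kN−k²)! ∏_{j=0}^{k−1} j! / ∏_{j=N−k}^{N−1} j!`. -/
theorem trPhi_pow_top (k N n : ℕ) (hk : 1 ≤ k) (hN : k < N) (hn : n = N - k) :
    (trPhi k n) ^ (k * n) = ((k * n).factorial : ℝ) • T k n := by
  classical
  set L : List (ExteriorAlgebra ℝ (V k n)) :=
    ((List.finRange n).map (fun s =>
      (List.finRange k).map (fun j => ψ k n s j * ψb k n s j))).flatten with hL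
  have hmem : ∀ x ∈ L, ∃ s j, x = ψ k n s j * ψb k n s j := by
    intro x hx
    rw [hL] at hx
    simp only [List.mem_flatten, List.mem_map] at hx
    obtain ⟨l, ⟨s, _, rfl⟩, hxl⟩ := hx
    obtain ⟨j, _, rfl⟩ := List.mem_map.mp hxl
    exact ⟨s, j, rfl⟩
  have hc : ∀ x ∈ L, ∀ y ∈ L, Commute x y := by
    intro x hx y hy
    obtain ⟨s, j, rfl⟩ := hmem x hx
    obtain ⟨s', j', rfl⟩ := hmem y hy
    exact TrPhiAux.comm4 _ _ _ _
  have hz : ∀ x ∈ L, x * x = 0 := by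
    intro x hx
    obtain ⟨s, j, rfl⟩ := hmem x hx
    exact TrPhiAux.sq4 _ _
  have hlen : L.length = k * n := by
    rw [hL]
    simp [List.length_flatten, List.map_map, Function.comp_def, Nat.mul_comm]
  have hprod : L.prod = T k n := by
    rw [hL, List.prod_flatten, List.map_map, T]
    rfl
  have hsum : L.sum = trPhi k n := by
    rw [hL, List.sum_flatten, List.map_map]
    rw [trPhi]
    simp only [Function.comp_def, ω]
    rw [Finset.sum_comm]
    simp only [Fin.sum_univ_def]
  have := TrPhiAux.list_key L hc hz
  rw [hsum, hlen, hprod] at this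
  rw [this, Nat.cast_smul_eq_nsmul]
end
end

section
/- Let k, N be natural numbers with 1 ≤ k < N, n := N − k, and assume kn ≥ 2. Then in Λ(V): (tr Φ)^{kn−2} ∧ tr(Φ²) = (kn−2)! · k · n · (N − 2k) · T. (This is the evaluation of the fermion integral P₁ = ∫Dψ (tr Φ)^{kN−k²−2} tr(Φ²).) -/
noncomputable section

namespace P1aux

open ExteriorAlgebra

variable {k n : ℕ}

/-- generic anticommutation helper -/
lemma pair_commute {R : Type*} [Ring R] {u v w : R} (h1 : u * w = -(w * u))
    (h2 : v * w = -(w * v)) : Commute (u * v) w := by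
  show u * v * w = w * (u * v)
  calc u * v * w = u * (v * w) := by rw [mul_assoc]
    _ = u * -(w * v) := by rw [h2]
    _ = -(u * w * v) := by noncomm_ring
    _ = -(-(w * u) * v) := by rw [h1]
    _ = w * (u * v) := by noncomm_ring

lemma swap (a b : V k n) :
    ExteriorAlgebra.ι ℝ a * ExteriorAlgebra.ι ℝ b
      = -(ExteriorAlgebra.ι ℝ b * ExteriorAlgebra.ι ℝ a) :=
  eq_neg_of_add_eq_zero_left (ExteriorAlgebra.ι_add_mul_swap a b)

lemma quad_commute (a b c e : V k n) :
    Commute (ExteriorAlgebra.ι ℝ a * ExteriorAlgebra.ι ℝ b)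
      (ExteriorAlgebra.ι ℝ c * ExteriorAlgebra.ι ℝ e) :=
  Commute.mul_right (pair_commute (swap a c) (swap b c))
    (pair_commute (swap a e) (swap b e))

lemma Z1 (x a b : V k n) :
    (ExteriorAlgebra.ι ℝ x * ExteriorAlgebra.ι ℝ a)
      * (ExteriorAlgebra.ι ℝ x * ExteriorAlgebra.ι ℝ b) = 0 := by
  have h := swap a x
  have h0 := ExteriorAlgebra.ι_sq_zero (R := ℝ) x
  calc (ExteriorAlgebra.ι ℝ x * ExteriorAlgebra.ι ℝ a)
      * (ExteriorAlgebra.ι ℝ x * ExteriorAlgebra.ι ℝ b)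
      = ExteriorAlgebra.ι ℝ x * (ExteriorAlgebra.ι ℝ a * ExteriorAlgebra.ι ℝ x)
          * ExteriorAlgebra.ι ℝ b := by noncomm_ring
    _ = ExteriorAlgebra.ι ℝ x * -(ExteriorAlgebra.ι ℝ x * ExteriorAlgebra.ι ℝ a)
          * ExteriorAlgebra.ι ℝ b := by rw [h]
    _ = -((ExteriorAlgebra.ι ℝ x * ExteriorAlgebra.ι ℝ x)
          * (ExteriorAlgebra.ι ℝ a * ExteriorAlgebra.ι ℝ b)) := by noncomm_ring
    _ = 0 := by rw [h0, zero_mul, neg_zero]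

lemma Z2 (x a b : V k n) :
    (ExteriorAlgebra.ι ℝ a * ExteriorAlgebra.ι ℝ x)
      * (ExteriorAlgebra.ι ℝ b * ExteriorAlgebra.ι ℝ x) = 0 := by
  have h := swap x b
  have h0 := ExteriorAlgebra.ι_sq_zero (R := ℝ) x
  calc (ExteriorAlgebra.ι ℝ a * ExteriorAlgebra.ι ℝ x)
      * (ExteriorAlgebra.ι ℝ b * ExteriorAlgebra.ι ℝ x)
      = ExteriorAlgebra.ι ℝ a * (ExteriorAlgebra.ι ℝ x * ExteriorAlgebra.ι ℝ b)
          * ExteriorAlgebra.ι ℝ x := by noncomm_ring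
    _ = ExteriorAlgebra.ι ℝ a * -(ExteriorAlgebra.ι ℝ b * ExteriorAlgebra.ι ℝ x)
          * ExteriorAlgebra.ι ℝ x := by rw [h]
    _ = -((ExteriorAlgebra.ι ℝ a * ExteriorAlgebra.ι ℝ b)
          * (ExteriorAlgebra.ι ℝ x * ExteriorAlgebra.ι ℝ x)) := by noncomm_ring
    _ = 0 := by rw [h0, mul_zero, neg_zero]

lemma sign4 (a b c e : V k n) :
    (ExteriorAlgebra.ι ℝ a * ExteriorAlgebra.ι ℝ b)
      * (ExteriorAlgebra.ι ℝ c * ExteriorAlgebra.ι ℝ e)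
      = -((ExteriorAlgebra.ι ℝ a * ExteriorAlgebra.ι ℝ e)
          * (ExteriorAlgebra.ι ℝ c * ExteriorAlgebra.ι ℝ b)) := by
  have h1 := swap b c
  have h2 := swap b e
  have h3 := swap c e
  calc (ExteriorAlgebra.ι ℝ a * ExteriorAlgebra.ι ℝ b)
      * (ExteriorAlgebra.ι ℝ c * ExteriorAlgebra.ι ℝ e)
      = ExteriorAlgebra.ι ℝ a * (ExteriorAlgebra.ι ℝ b * ExteriorAlgebra.ι ℝ c)
          * ExteriorAlgebra.ι ℝ e := by noncomm_ring
    _ = ExteriorAlgebra.ι ℝ a * -(ExteriorAlgebra.ι ℝ c * ExteriorAlgebra.ι ℝ b)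
          * ExteriorAlgebra.ι ℝ e := by rw [h1]
    _ = -(ExteriorAlgebra.ι ℝ a * ExteriorAlgebra.ι ℝ c
          * (ExteriorAlgebra.ι ℝ b * ExteriorAlgebra.ι ℝ e)) := by noncomm_ring
    _ = -(ExteriorAlgebra.ι ℝ a * ExteriorAlgebra.ι ℝ c
          * -(ExteriorAlgebra.ι ℝ e * ExteriorAlgebra.ι ℝ b)) := by rw [h2]
    _ = ExteriorAlgebra.ι ℝ a * (ExteriorAlgebra.ι ℝ c * ExteriorAlgebra.ι ℝ e)
          * ExteriorAlgebra.ι ℝ b := by noncomm_ring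
    _ = ExteriorAlgebra.ι ℝ a * -(ExteriorAlgebra.ι ℝ e * ExteriorAlgebra.ι ℝ c)
          * ExteriorAlgebra.ι ℝ b := by rw [h3]
    _ = -((ExteriorAlgebra.ι ℝ a * ExteriorAlgebra.ι ℝ e)
          * (ExteriorAlgebra.ι ℝ c * ExteriorAlgebra.ι ℝ b)) := by noncomm_ring

def dd (k n : ℕ) (x : Fin n × Fin k) : ExteriorAlgebra ℝ (V k n) :=
  ψ k n x.1 x.2 * ψb k n x.1 x.2

lemma dd_commute (x y : Fin n × Fin k) : Commute (dd k n x) (dd k n y) := by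
  unfold dd ψ ψb; exact quad_commute _ _ _ _

lemma dd_sq (x : Fin n × Fin k) : dd k n x * dd k n x = 0 := by
  unfold dd ψ ψb; exact Z1 _ _ _

lemma ddP (S : Finset (Fin n × Fin k)) :
    (S : Set (Fin n × Fin k)).Pairwise (Function.onFun Commute (dd k n)) :=
  fun x _ y _ _ => dd_commute x y

lemma noncommProd_set_congr {S1 S2 : Finset (Fin n × Fin k)} (h : S1 = S2) :
    S1.noncommProd (dd k n) (ddP S1) = S2.noncommProd (dd k n) (ddP S2) := by
  subst h; rfl

lemma prod_mul_dd (S : Finset (Fin n × Fin k)) {z : Fin n × Fin k} (hz : z ∈ S) :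
    S.noncommProd (dd k n) (ddP S) * dd k n z = 0 := by
  rw [← Finset.noncommProd_erase_mul S hz (dd k n) (ddP S), mul_assoc, dd_sq, mul_zero]

lemma prod_mul_sum (S : Finset (Fin n × Fin k)) :
    S.noncommProd (dd k n) (ddP S) * (∑ x ∈ S, dd k n x) = 0 := by
  rw [Finset.mul_sum]
  exact Finset.sum_eq_zero fun z hz => prod_mul_dd S hz

lemma sum_pow_card (S : Finset (Fin n × Fin k)) :
    (∑ x ∈ S, dd k n x) ^ S.card = (S.card).factorial • S.noncommProd (dd k n) (ddP S) := by
  classical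
  induction S using Finset.induction_on with
  | empty => simp
  | @insert a s ha ih =>
    rw [Finset.sum_insert ha, Finset.card_insert_of_notMem ha]
    have hxy : Commute (dd k n a) (∑ x ∈ s, dd k n x) :=
      Commute.sum_right _ _ _ fun i _ => dd_commute a i
    rw [hxy.add_pow]
    rw [Finset.sum_eq_single_of_mem 1 (by simp)]
    · rw [pow_one, Nat.choose_one_right, Nat.add_sub_cancel, ih, mul_smul_comm, smul_mul_assoc]
      rw [← (Nat.cast_commute ((s.card + 1) : ℕ)
        (dd k n a * s.noncommProd (dd k n) (ddP s))).eq]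
      rw [← nsmul_eq_mul, smul_smul]
      rw [Finset.noncommProd_insert_of_notMem s a (dd k n) (ddP _) ha]
      rw [Nat.factorial_succ, mul_comm]
    · intro b hb hb1
      match b with
      | 0 =>
        rw [pow_zero, one_mul, Nat.sub_zero, Nat.choose_zero_right, Nat.cast_one, mul_one,
          pow_succ, ih, smul_mul_assoc, prod_mul_sum, smul_zero]
      | 1 => exact absurd rfl hb1
      | (m+2) =>
        rw [pow_add, pow_two, dd_sq, mul_zero, zero_mul, zero_mul]

lemma sum_pow_eq_zero (S : Finset (Fin n × Fin k)) {p : ℕ} (hp : S.card < p) :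
    (∑ x ∈ S, dd k n x) ^ p = 0 := by
  obtain ⟨r, rfl⟩ : ∃ r, p = (S.card + 1) + r := ⟨p - (S.card + 1), by omega⟩
  rw [pow_add, pow_succ, sum_pow_card, smul_mul_assoc, prod_mul_sum, smul_zero, zero_mul]

lemma absorb (B : Finset (Fin n × Fin k)) (p : ℕ) :
    ∀ (u : ExteriorAlgebra ℝ (V k n)), (∀ z ∈ B, dd k n z * u = 0) →
    (∑ x : Fin n × Fin k, dd k n x) ^ p * u
      = (∑ x ∈ Finset.univ \ B, dd k n x) ^ p * u := by
  induction p with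
  | zero => intro u _; simp
  | succ p ih =>
    intro u hu
    have hsplit : (∑ x : Fin n × Fin k, dd k n x) * u
        = (∑ x ∈ Finset.univ \ B, dd k n x) * u := by
      have hs : (∑ x ∈ Finset.univ \ B, dd k n x) + (∑ x ∈ B, dd k n x)
          = ∑ x : Fin n × Fin k, dd k n x :=
        Finset.sum_sdiff (Finset.subset_univ B)
      have hB : (∑ x ∈ B, dd k n x) * u = 0 := by
        rw [Finset.sum_mul]; exact Finset.sum_eq_zero (fun z hz => hu z hz)
      rw [← hs, add_mul, hB, add_zero]
    have hu' : ∀ z ∈ B, dd k n z * ((∑ x ∈ Finset.univ \ B, dd k n x) * u) = 0 := by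
      intro z hz
      have hc : Commute (dd k n z) (∑ x ∈ Finset.univ \ B, dd k n x) :=
        Commute.sum_right _ _ _ fun i _ => dd_commute z i
      rw [← mul_assoc, hc.eq, mul_assoc, hu z hz, mul_zero]
    calc (∑ x : Fin n × Fin k, dd k n x) ^ (p+1) * u
        = (∑ x : Fin n × Fin k, dd k n x) ^ p
            * ((∑ x : Fin n × Fin k, dd k n x) * u) := by rw [pow_succ, mul_assoc]
      _ = (∑ x : Fin n × Fin k, dd k n x) ^ p
            * ((∑ x ∈ Finset.univ \ B, dd k n x) * u) := by rw [hsplit]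
      _ = (∑ x ∈ Finset.univ \ B, dd k n x) ^ p
            * ((∑ x ∈ Finset.univ \ B, dd k n x) * u) := ih _ hu'
      _ = (∑ x ∈ Finset.univ \ B, dd k n x) ^ (p+1) * u := by rw [pow_succ, mul_assoc]

lemma prod_univ_eq_T :
    (Finset.univ : Finset (Fin n × Fin k)).noncommProd (dd k n) (ddP _) = T k n := by
  classical
  have hnd : ((List.finRange n) ×ˢ (List.finRange k)).Nodup :=
    (List.nodup_finRange n).product (List.nodup_finRange k)
  have hU : ((List.finRange n) ×ˢ (List.finRange k)).toFinset
      = (Finset.univ : Finset (Fin n × Fin k)) := by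
    ext ⟨s, j⟩; simp [List.mem_product]
  rw [noncommProd_set_congr hU.symm]
  rw [Finset.noncommProd_toFinset _ _ _ hnd]
  have hmap : ((List.finRange n) ×ˢ (List.finRange k)).map (dd k n)
      = ((List.finRange n).map (fun s =>
          (List.finRange k).map (fun j => ψ k n s j * ψb k n s j))).flatten := by
    simp only [SProd.sprod, List.product, List.map_flatMap, List.flatMap_def, List.map_flatten, List.map_map]
    simp [List.map_map, Function.comp_def, dd]
  rw [hmap, List.prod_flatten, T, List.map_map]
  rfl

lemma key_ne (x y : Fin n × Fin k) (hxy : x ≠ y) :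
    (∑ z : Fin n × Fin k, dd k n z) ^ (k * n - 2) * (dd k n x * dd k n y)
      = (k * n - 2).factorial • T k n := by
  classical
  have hkill : ∀ z ∈ ({x, y} : Finset (Fin n × Fin k)),
      dd k n z * (dd k n x * dd k n y) = 0 := by
    intro z hz
    rcases Finset.mem_insert.mp hz with rfl | hz
    · rw [← mul_assoc, dd_sq, zero_mul]
    · rcases Finset.mem_singleton.mp hz with rfl
      rw [← mul_assoc, (dd_commute z x).eq, mul_assoc, dd_sq, mul_zero]
  rw [absorb _ _ _ hkill]
  have hS : (Finset.univ \ ({x, y} : Finset (Fin n × Fin k))).card = k * n - 2 := by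
    rw [Finset.card_sdiff_of_subset (Finset.subset_univ _), Finset.card_univ]
    simp [Fintype.card_prod, hxy, Nat.mul_comm]
  have hprod : (Finset.univ \ ({x, y} : Finset (Fin n × Fin k))).noncommProd (dd k n)
        (ddP _) * (dd k n x * dd k n y) = T k n := by
    have h1 : Finset.univ \ ({x, y} : Finset (Fin n × Fin k))
        = ((Finset.univ : Finset (Fin n × Fin k)).erase x).erase y := by
      ext z
      simp only [Finset.mem_sdiff, Finset.mem_univ, true_and, Finset.mem_insert,
        Finset.mem_singleton, Finset.mem_erase, and_true]
      tauto
    have hyx : y ∈ (Finset.univ : Finset (Fin n × Fin k)).erase x :=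
      Finset.mem_erase.mpr ⟨Ne.symm hxy, Finset.mem_univ y⟩
    calc (Finset.univ \ ({x, y} : Finset (Fin n × Fin k))).noncommProd (dd k n) (ddP _)
          * (dd k n x * dd k n y)
        = (((Finset.univ : Finset (Fin n × Fin k)).erase x).erase y).noncommProd (dd k n)
            (ddP _) * (dd k n y * dd k n x) := by
          rw [noncommProd_set_congr h1, (dd_commute x y).eq]
      _ = ((((Finset.univ : Finset (Fin n × Fin k)).erase x).erase y).noncommProd (dd k n)
            (ddP _) * dd k n y) * dd k n x := by rw [mul_assoc]
      _ = (((Finset.univ : Finset (Fin n × Fin k)).erase x).noncommProd (dd k n)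
            (ddP _)) * dd k n x := by
          rw [Finset.noncommProd_erase_mul _ hyx (dd k n) (ddP _)]
      _ = (Finset.univ : Finset (Fin n × Fin k)).noncommProd (dd k n) (ddP _) := by
          rw [Finset.noncommProd_erase_mul _ (Finset.mem_univ x) (dd k n) (ddP _)]
      _ = T k n := prod_univ_eq_T
  rw [← hS, sum_pow_card, smul_mul_assoc, hprod]

lemma key_zero {s t : Fin n} {i j : Fin k} (hst : s ≠ t) (hij : i ≠ j) :
    (∑ z : Fin n × Fin k, dd k n z) ^ (k * n - 2) *
      ((ψ k n s i * ψb k n s j) * (ψ k n t j * ψb k n t i)) = 0 := by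
  classical
  have hk2 : 2 ≤ k := by
    have h1 := i.isLt; have h2 := j.isLt
    have : (i : ℕ) ≠ (j : ℕ) := fun h => hij (Fin.ext h)
    omega
  have hn2 : 2 ≤ n := by
    have h1 := s.isLt; have h2 := t.isLt
    have : (s : ℕ) ≠ (t : ℕ) := fun h => hst (Fin.ext h)
    omega
  set B : Finset (Fin n × Fin k) := {(s,i), (s,j), (t,i), (t,j)} with hB
  have hkill : ∀ z ∈ B,
      dd k n z * ((ψ k n s i * ψb k n s j) * (ψ k n t j * ψb k n t i)) = 0 := by
    intro z hz
    have hcomm1 : Commute (dd k n z) (ψ k n s i * ψb k n s j) := by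
      unfold dd ψ ψb; exact quad_commute _ _ _ _
    simp only [hB, Finset.mem_insert, Finset.mem_singleton] at hz
    rcases hz with rfl | rfl | rfl | rfl
    · rw [← mul_assoc]
      have : dd k n (s, i) * (ψ k n s i * ψb k n s j) = 0 := by
        unfold dd ψ ψb; exact Z1 _ _ _
      rw [this, zero_mul]
    · rw [← mul_assoc]
      have : dd k n (s, j) * (ψ k n s i * ψb k n s j) = 0 := by
        unfold dd ψ ψb
        exact Z2 _ _ _
      rw [this, zero_mul]
    · rw [← mul_assoc, hcomm1.eq, mul_assoc]
      have : dd k n (t, i) * (ψ k n t j * ψb k n t i) = 0 := by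
        unfold dd ψ ψb; exact Z2 _ _ _
      rw [this, mul_zero]
    · rw [← mul_assoc, hcomm1.eq, mul_assoc]
      have : dd k n (t, j) * (ψ k n t j * ψb k n t i) = 0 := by
        unfold dd ψ ψb; exact Z1 _ _ _
      rw [this, mul_zero]
  rw [absorb _ _ _ hkill]
  have hcard : (Finset.univ \ B).card < k * n - 2 := by
    have hBcard : B.card = 4 := by
      rw [hB]
      rw [Finset.card_insert_of_notMem (by
        simp [Prod.ext_iff]
        tauto)]
      rw [Finset.card_insert_of_notMem (by
        simp [Prod.ext_iff]
        tauto)]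
      rw [Finset.card_insert_of_notMem (by
        simp [Prod.ext_iff]
        tauto)]
      rw [Finset.card_singleton]
    rw [Finset.card_sdiff_of_subset (Finset.subset_univ _), Finset.card_univ, Fintype.card_prod,
      Fintype.card_fin, Fintype.card_fin, hBcard]
    have h4 : 4 ≤ n * k := by nlinarith
    rw [Nat.mul_comm k n]
    omega
  rw [sum_pow_eq_zero _ hcard, zero_mul]

end P1aux

open P1aux in
/-- `(tr Φ)^{kn−2} ∧ tr(Φ²) = (kn−2)! · k · n · (N − 2k) · T`
(the fermion integral `P₁`). -/
theorem P1_eval (k N n : ℕ) (hk : 1 ≤ k) (hN : k < N) (hn : n = N - k)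
    (hkn : 2 ≤ k * n) :
    (trPhi k n) ^ (k * n - 2) * trPhi2 k n =
      (((k * n - 2).factorial : ℝ) * (k : ℝ) * (n : ℝ) * ((N : ℝ) - 2 * (k : ℝ))) •
        T k n := by

  classical
  have hNk : N = n + k := by omega
  have htr : trPhi k n = ∑ x : Fin n × Fin k, dd k n x := by
    rw [Fintype.sum_prod_type]
    rw [show trPhi k n = ∑ i : Fin k, ∑ s : Fin n, ψ k n s i * ψb k n s i by
      simp only [trPhi, ω]]
    rw [Finset.sum_comm]
    rfl
  have hterm : ∀ (i j : Fin k) (s t : Fin n),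
      (∑ z : Fin n × Fin k, dd k n z) ^ (k * n - 2)
        * (ψ k n s i * ψb k n s j * (ψ k n t j * ψb k n t i))
      = ((((k * n - 2).factorial : ℝ)) *
          ((if i = j then (1:ℝ) else 0) - (if s = t then (1:ℝ) else 0))) • T k n := by
    intro i j s t
    by_cases hij : i = j
    · subst hij
      by_cases hst : s = t
      · subst hst
        have h0 : ψ k n s i * ψb k n s i * (ψ k n s i * ψb k n s i) = 0 := by
          unfold ψ ψb; exact Z1 _ _ _
        rw [h0, mul_zero]
        simp
      · have hxy : ((s, i) : Fin n × Fin k) ≠ (t, i) := by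
          simp only [ne_eq, Prod.mk.injEq, not_and]
          exact fun h => absurd h hst
        have h := key_ne (k := k) (n := n) (s, i) (t, i) hxy
        rw [show ψ k n s i * ψb k n s i * (ψ k n t i * ψb k n t i)
            = dd k n (s, i) * dd k n (t, i) from rfl]
        rw [h]
        simp [hst, Nat.cast_smul_eq_nsmul]
    · by_cases hst : s = t
      · subst hst
        have hxy : ((s, i) : Fin n × Fin k) ≠ (s, j) := by
          simp only [ne_eq, Prod.mk.injEq, true_and]
          exact hij
        have hsign : ψ k n s i * ψb k n s j * (ψ k n s j * ψb k n s i)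
            = -(dd k n (s, i) * dd k n (s, j)) := by
          unfold dd ψ ψb
          exact sign4 _ _ _ _
        rw [hsign, mul_neg, key_ne (k := k) (n := n) (s, i) (s, j) hxy]
        simp [hij, Nat.cast_smul_eq_nsmul]
      · rw [key_zero hst hij]
        simp [hij, hst]
  rw [htr]
  simp only [trPhi2, ω, Finset.sum_mul, Finset.mul_sum]
  simp only [hterm]
  simp only [← Finset.sum_smul]
  congr 1
  simp only [mul_sub, mul_ite, mul_one, mul_zero, Finset.sum_sub_distrib,
    Finset.sum_ite_eq, Finset.sum_ite_eq', Finset.mem_univ, if_true, Finset.sum_const, Finset.card_univ,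
    Fintype.card_fin, nsmul_eq_mul]
  push_cast [hNk]
  ring
end
end

section
/- Let k, N be natural numbers with 1 ≤ k < N, n := N − k, and assume kn ≥ 2. Then in Λ(V): (tr Φ)^{kn−2} ∧ ((tr Φ)² − tr(Φ²)) = (kn−2)! · n · (n+1) · k · (k−1) · T. (Equivalently, with τ₂ := ½((tr Φ)² − tr(Φ²)) the second coefficient of det(I + tΦ), this states ∫_{G(k,N)} (σ₁^∨)^{kN−k²−2} σ_{1,1}^∨ = ½ (kN−k²−2)! (N−k)(N−k+1) k(k−1) · (∏_{j=0}^{k−1} j!)/(∏_{j=N−k}^{N−1} j!).) -/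
set_option maxHeartbeats 1000000
set_option synthInstance.maxHeartbeats 400000


noncomputable section

namespace Tau2Aux

open ExteriorAlgebra

variable {k n : ℕ}

lemma swap2 (x y : V k n) : ι ℝ x * ι ℝ y = -(ι ℝ y * ι ℝ x) :=
  eq_neg_of_add_eq_zero_left (ι_add_mul_swap x y)

lemma swap3 (x y : V k n) (z : ExteriorAlgebra ℝ (V k n)) :
    ι ℝ x * (ι ℝ y * z) = -(ι ℝ y * (ι ℝ x * z)) := by
  rw [← mul_assoc, swap2, neg_mul, mul_assoc]

lemma sq3 (x : V k n) (z : ExteriorAlgebra ℝ (V k n)) : ι ℝ x * (ι ℝ x * z) = 0 := by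
  rw [← mul_assoc, ι_sq_zero, zero_mul]

lemma Z1 (a b c : V k n) : (ι ℝ a * ι ℝ b) * (ι ℝ a * ι ℝ c) = 0 := by
  rw [mul_assoc, swap3 b a, mul_neg, sq3, neg_zero]

lemma Z2 (a b c : V k n) : (ι ℝ a * ι ℝ b) * (ι ℝ c * ι ℝ b) = 0 := by
  rw [mul_assoc, swap3 b c, ι_sq_zero, mul_zero, neg_zero, mul_zero]

lemma Z3 (a b c d : V k n) :
    (ι ℝ a * ι ℝ b) * (ι ℝ c * ι ℝ d) = -((ι ℝ c * ι ℝ b) * (ι ℝ a * ι ℝ d)) := by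
  rw [mul_assoc, swap3 b c, mul_neg, swap3 a c, neg_neg, swap3 a b, mul_neg, mul_assoc]

lemma commι (x y z : V k n) : Commute (ι ℝ z) (ι ℝ x * ι ℝ y) := by
  show ι ℝ z * (ι ℝ x * ι ℝ y) = (ι ℝ x * ι ℝ y) * ι ℝ z
  rw [swap3 z x, swap2 z y, mul_neg, neg_neg, mul_assoc]

end Tau2Aux

open Tau2Aux in
def genSet (k n : ℕ) : Set (ExteriorAlgebra ℝ (V k n)) :=
  {x | ∃ v w : V k n, x = ExteriorAlgebra.ι ℝ v * ExteriorAlgebra.ι ℝ w}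

open Tau2Aux in
theorem genSet_comm (k n : ℕ) : ∀ a ∈ genSet k n, ∀ b ∈ genSet k n, a * b = b * a := by
  rintro _ ⟨v, w, rfl⟩ _ ⟨x, y, rfl⟩
  exact ((commι x y v).mul_left (commι x y w)).eq

def EE (k n : ℕ) : Subalgebra ℝ (ExteriorAlgebra ℝ (V k n)) :=
  Algebra.adjoin ℝ (genSet k n)

noncomputable instance (k n : ℕ) : CommRing (EE k n) :=
  { (EE k n).toRing with mul_comm := (Algebra.adjoinCommRingOfComm ℝ (genSet_comm k n)).mul_comm }

def valE (k n : ℕ) : EE k n →+* ExteriorAlgebra ℝ (V k n) where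
  toFun := Subtype.val
  map_one' := rfl
  map_mul' _ _ := rfl
  map_zero' := rfl
  map_add' _ _ := rfl

def gg (k n : ℕ) (s : Fin n) (i j : Fin k) : EE k n :=
  ⟨ψ k n s i * ψb k n s j, Algebra.subset_adjoin ⟨_, _, rfl⟩⟩

@[simp] lemma valE_gg (k n : ℕ) (s : Fin n) (i j : Fin k) :
    valE k n (gg k n s i j) = ψ k n s i * ψb k n s j := rfl

lemma valE_inj (k n : ℕ) : Function.Injective (valE k n) := Subtype.val_injective

open Tau2Aux in
lemma ggZ1 (k n : ℕ) (s : Fin n) (i j j' : Fin k) :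
    gg k n s i j * gg k n s i j' = 0 := by
  apply valE_inj
  rw [map_mul, map_zero, valE_gg, valE_gg]
  exact Z1 _ _ _

open Tau2Aux in
lemma ggZ2 (k n : ℕ) (s : Fin n) (i i' j : Fin k) :
    gg k n s i j * gg k n s i' j = 0 := by
  apply valE_inj
  rw [map_mul, map_zero, valE_gg, valE_gg]
  exact Z2 _ _ _

open Tau2Aux in
lemma ggZ3 (k n : ℕ) (s : Fin n) (i j : Fin k) :
    gg k n s i j * gg k n s j i = -(gg k n s j j * gg k n s i i) := by
  apply valE_inj
  rw [map_mul, map_neg, map_mul, valE_gg, valE_gg, valE_gg, valE_gg]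
  exact Z3 _ _ _ _


section CommLemmas

variable {R : Type*} [CommRing R] {ι : Type*} [DecidableEq ι]

lemma prod_mul_self_eq_zero (f : ι → R) {s : Finset ι} (h0 : ∀ i ∈ s, f i * f i = 0)
    {j : ι} (hj : j ∈ s) : (∏ i ∈ s, f i) * f j = 0 := by
  rw [← Finset.mul_prod_erase s f hj, mul_comm (f j), mul_assoc, h0 j hj, mul_zero]

lemma sq_zero_add_pow (x y : R) (hx : x * x = 0) (m : ℕ) :
    (x + y) ^ (m + 1) = y ^ (m + 1) + (m + 1) • (x * y ^ m) := by
  induction m with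
  | zero => simp [add_comm]
  | succ m ih =>
    rw [pow_succ, ih]
    simp only [nsmul_eq_mul]
    push_cast
    linear_combination (((m : R) + 1) * y ^ m) * hx

lemma sum_pow_card (f : ι → R) (s : Finset ι) (h0 : ∀ i ∈ s, f i * f i = 0) :
    (∑ i ∈ s, f i) ^ s.card = s.card.factorial • ∏ i ∈ s, f i := by
  induction s using Finset.induction_on with
  | empty => simp
  | insert a s ha ih =>
    have h0' : ∀ i ∈ s, f i * f i = 0 := fun i hi => h0 i (Finset.mem_insert_of_mem hi)
    have hy : (∑ i ∈ s, f i) ^ (s.card + 1) = 0 := by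
      rw [pow_succ, ih h0', smul_mul_assoc, Finset.mul_sum,
        Finset.sum_eq_zero (fun i hi => prod_mul_self_eq_zero f h0' hi), smul_zero]
    rw [Finset.sum_insert ha, Finset.card_insert_of_notMem ha,
      sq_zero_add_pow _ _ (h0 a (Finset.mem_insert_self a s)) s.card, hy, zero_add,
      ih h0', mul_smul_comm, smul_smul, Finset.prod_insert ha, Nat.factorial_succ]

lemma sum_pow_eq_zero_of_card_lt (f : ι → R) (s : Finset ι) (h0 : ∀ i ∈ s, f i * f i = 0)
    {m : ℕ} (hm : s.card < m) : (∑ i ∈ s, f i) ^ m = 0 := by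
  obtain ⟨j, rfl⟩ : ∃ j, m = (s.card + 1) + j := ⟨m - (s.card + 1), by omega⟩
  have h1 : (∑ i ∈ s, f i) ^ (s.card + 1) = 0 := by
    rw [pow_succ, sum_pow_card f s h0, smul_mul_assoc, Finset.mul_sum,
      Finset.sum_eq_zero (fun i hi => prod_mul_self_eq_zero f h0 hi), smul_zero]
  rw [pow_add, h1, zero_mul]

lemma pow_mul_eq_of_mul_eq_zero (x y z : R) (hxz : x * z = 0) (m : ℕ) :
    (x + y) ^ m * z = y ^ m * z := by
  induction m with
  | zero => simp
  | succ m ih =>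
    rw [pow_succ, pow_succ, mul_assoc, mul_assoc]
    have h : (x + y) * z = y * z := by rw [add_mul, hxz, zero_add]
    rw [h, mul_comm y z, ← mul_assoc, ← mul_assoc, ih]

lemma key_prod (f : ι → R) (u : Finset ι) (h0 : ∀ i ∈ u, f i * f i = 0) {a b : ι}
    (ha : a ∈ u) (hb : b ∈ u) (hab : a ≠ b) {m : ℕ} (hm : u.card = m + 2) :
    (∑ i ∈ u, f i) ^ m * (f a * f b) = m.factorial • ∏ i ∈ u, f i := by
  classical
  set s := (u.erase a).erase b with hs
  have hbs : b ∈ u.erase a := Finset.mem_erase.2 ⟨hab.symm, hb⟩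
  have hcard : s.card = m := by
    rw [hs, Finset.card_erase_of_mem hbs, Finset.card_erase_of_mem ha, hm]
    omega
  have hsplit : ∑ i ∈ u, f i = (f a + f b) + ∑ i ∈ s, f i := by
    rw [← Finset.add_sum_erase u f ha, ← Finset.add_sum_erase _ f hbs, add_assoc]
  have hxz : (f a + f b) * (f a * f b) = 0 := by
    linear_combination f b * h0 a ha + f a * h0 b hb
  have h0' : ∀ i ∈ s, f i * f i = 0 := fun i hi =>
    h0 i (Finset.mem_of_mem_erase (Finset.mem_of_mem_erase hi))
  rw [hsplit, pow_mul_eq_of_mul_eq_zero _ _ _ hxz, ← hcard, sum_pow_card f s h0', hcard,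
    smul_mul_assoc]
  congr 1
  rw [← Finset.mul_prod_erase u f ha, ← Finset.mul_prod_erase _ f hbs]
  ring

lemma vanish_lemma (f : ι → R) (u C : Finset ι) (hCu : C ⊆ u)
    (h0 : ∀ i ∈ u, f i * f i = 0) (z : R) (hz : ∀ c ∈ C, f c * z = 0) {m : ℕ}
    (hm : (u \ C).card < m) : (∑ i ∈ u, f i) ^ m * z = 0 := by
  have hsplit : ∑ i ∈ u, f i = (∑ i ∈ C, f i) + ∑ i ∈ u \ C, f i := by
    rw [add_comm, Finset.sum_sdiff hCu]
  have hxz : (∑ i ∈ C, f i) * z = 0 := by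
    rw [Finset.sum_mul]; exact Finset.sum_eq_zero hz
  have hpow : (∑ i ∈ u \ C, f i) ^ m = 0 :=
    sum_pow_eq_zero_of_card_lt f _ (fun i hi => h0 i (Finset.mem_sdiff.1 hi).1) hm
  rw [hsplit, pow_mul_eq_of_mul_eq_zero _ _ _ hxz, hpow, zero_mul]

lemma double_ite_sum {M : Type*} [AddCommGroup M] {β : Type*} [Fintype β] [DecidableEq β]
    (x y : M) :
    (∑ i : β, ∑ j : β, if i = j then x else y) =
      (Fintype.card β) • ((x - y) + (Fintype.card β) • y) := by
  have h : ∀ i : β, (∑ j : β, if i = j then x else y) = (x - y) + (Fintype.card β) • y := by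
    intro i
    have : ∀ j : β, (if i = j then x else y) = (if i = j then x - y else 0) + y := by
      intro j; split <;> simp
    rw [Finset.sum_congr rfl (fun j _ => this j), Finset.sum_add_distrib,
      Finset.sum_ite_eq Finset.univ i (fun _ => x - y)]
    simp [Finset.card_univ]
  rw [Finset.sum_congr rfl (fun i _ => h i), Finset.sum_const, Finset.card_univ]

end CommLemmas

-- === main combinatorial layer ===

def eE (k n : ℕ) (a : Fin n × Fin k) : EE k n := gg k n a.1 a.2 a.2

def PP (k n : ℕ) : EE k n := ∑ a : Fin n × Fin k, eE k n a

def T2E (k n : ℕ) : EE k n :=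
  ∑ i : Fin k, ∑ j : Fin k,
    (∑ s : Fin n, gg k n s i j) * (∑ t : Fin n, gg k n t j i)

def PiE (k n : ℕ) : EE k n := ∏ a : Fin n × Fin k, eE k n a

lemma h0E (k n : ℕ) : ∀ a ∈ (Finset.univ : Finset (Fin n × Fin k)),
    eE k n a * eE k n a = 0 := fun a _ => ggZ1 k n a.1 a.2 a.2 a.2

lemma hcard_univ (k n : ℕ) :
    (Finset.univ : Finset (Fin n × Fin k)).card = n * k := by
  simp [Finset.card_univ]

lemma hterm (k n m : ℕ) (hm : n * k = m + 2) (i j : Fin k) (s t : Fin n) :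
    PP k n ^ m * (gg k n s i j * gg k n t j i) =
      if i = j then (if s = t then 0 else m.factorial • PiE k n)
      else (if s = t then -(m.factorial • PiE k n) else 0) := by
  have hcard : (Finset.univ : Finset (Fin n × Fin k)).card = m + 2 := by
    rw [hcard_univ, hm]
  by_cases hij : i = j
  · subst hij
    by_cases hst : s = t
    · subst hst
      rw [ggZ1 k n s i i i, mul_zero, if_pos rfl, if_pos rfl]
    · rw [if_pos rfl, if_neg hst]
      exact key_prod (eE k n) Finset.univ (h0E k n) (Finset.mem_univ (s, i))
        (Finset.mem_univ (t, i)) (fun h => hst (congrArg Prod.fst h)) hcard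
  · by_cases hst : s = t
    · subst hst
      rw [if_neg hij, if_pos rfl, ggZ3, mul_neg]
      congr 1
      exact key_prod (eE k n) Finset.univ (h0E k n) (Finset.mem_univ (s, j))
        (Finset.mem_univ (s, i)) (fun h => hij (congrArg Prod.snd h).symm) hcard
    · rw [if_neg hij, if_neg hst]
      have hk2 : 2 ≤ k := by
        have h1 := i.isLt; have h2 := j.isLt
        have : (i : ℕ) ≠ j := Fin.val_ne_of_ne hij
        omega
      have hn2 : 2 ≤ n := by
        have h1 := s.isLt; have h2 := t.isLt
        have : (s : ℕ) ≠ t := Fin.val_ne_of_ne hst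
        omega
      set C : Finset (Fin n × Fin k) := {(s, i), (s, j), (t, i), (t, j)} with hC
      have hCcard : C.card = 4 := by
        rw [hC]
        rw [Finset.card_insert_of_notMem (by simp [Prod.ext_iff, hij, hst]),
          Finset.card_insert_of_notMem (by simp [Prod.ext_iff, hij, hst]),
          Finset.card_insert_of_notMem (by simp [Prod.ext_iff, hij, hst]),
          Finset.card_singleton]
      apply vanish_lemma (eE k n) Finset.univ C (Finset.subset_univ C) (h0E k n)
      · intro c hc
        rw [hC] at hc
        simp only [Finset.mem_insert, Finset.mem_singleton] at hc
        rcases hc with rfl | rfl | rfl | rfl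
        · show gg k n s i i * _ = 0
          rw [← mul_assoc, ggZ1, zero_mul]
        · show gg k n s j j * _ = 0
          rw [← mul_assoc, ggZ2, zero_mul]
        · show gg k n t i i * _ = 0
          rw [mul_left_comm, ggZ2, mul_zero]
        · show gg k n t j j * _ = 0
          rw [mul_left_comm, ggZ1, mul_zero]
      · rw [Finset.card_sdiff_of_subset (Finset.subset_univ C), hCcard, hcard]
        have : 4 ≤ m + 2 := by
          rw [← hm]; nlinarith
        omega

lemma main_EE (k n m : ℕ) (hm : n * k = m + 2) :
    PP k n ^ m * (PP k n ^ 2 - T2E k n) =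
      (m.factorial * (n * (n + 1) * k * (k - 1))) • PiE k n := by
  classical
  set cc : EE k n := m.factorial • PiE k n with hcc
  have hcard : (Finset.univ : Finset (Fin n × Fin k)).card = m + 2 := by
    rw [hcard_univ, hm]
  -- part A : PP^m * PP^2
  have hA : PP k n ^ m * PP k n ^ 2 =
      (n * k) • ((0 - cc) + (n * k) • cc) := by
    have expand : PP k n ^ m * PP k n ^ 2 =
        ∑ a : Fin n × Fin k, ∑ b : Fin n × Fin k,
          PP k n ^ m * (eE k n a * eE k n b) := by
      rw [pow_two, PP, Finset.sum_mul_sum, Finset.mul_sum]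
      refine Finset.sum_congr rfl fun a _ => ?_
      rw [Finset.mul_sum]
    rw [expand]
    have hab : ∀ a b : Fin n × Fin k,
        PP k n ^ m * (eE k n a * eE k n b) = if a = b then 0 else cc := by
      intro a b
      split
      · rename_i h; subst h
        rw [show eE k n a * eE k n a = 0 from ggZ1 k n a.1 a.2 a.2 a.2, mul_zero]
      · rename_i h
        exact key_prod (eE k n) Finset.univ (h0E k n) (Finset.mem_univ a)
          (Finset.mem_univ b) h hcard
    calc (∑ a : Fin n × Fin k, ∑ b : Fin n × Fin k,
            PP k n ^ m * (eE k n a * eE k n b))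
        = ∑ a : Fin n × Fin k, ∑ b : Fin n × Fin k, if a = b then (0 : EE k n) else cc :=
          Finset.sum_congr rfl fun a _ => Finset.sum_congr rfl fun b _ => hab a b
      _ = (n * k) • ((0 - cc) + (n * k) • cc) := by
          rw [double_ite_sum]; simp
  -- part B : PP^m * T2E
  have hB : PP k n ^ m * T2E k n =
      Fintype.card (Fin k) •
        ((n • ((0 - cc) + n • cc) - n • ((-cc - 0) + n • (0 : EE k n)))
          + Fintype.card (Fin k) • (n • ((-cc - 0) + n • (0 : EE k n)))) := by
    have expand : PP k n ^ m * T2E k n =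
        ∑ i : Fin k, ∑ j : Fin k, ∑ s : Fin n, ∑ t : Fin n,
          PP k n ^ m * (gg k n s i j * gg k n t j i) := by
      rw [T2E, Finset.mul_sum]
      refine Finset.sum_congr rfl fun i _ => ?_
      rw [Finset.mul_sum]
      refine Finset.sum_congr rfl fun j _ => ?_
      rw [Finset.sum_mul_sum, Finset.mul_sum]
      refine Finset.sum_congr rfl fun s _ => ?_
      rw [Finset.mul_sum]
    rw [expand]
    have hin : ∀ i j : Fin k,
        (∑ s : Fin n, ∑ t : Fin n, PP k n ^ m * (gg k n s i j * gg k n t j i)) =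
          if i = j then n • ((0 - cc) + n • cc)
          else n • ((-cc - 0) + n • (0 : EE k n)) := by
      intro i j
      by_cases hij : i = j
      · rw [if_pos hij]
        calc (∑ s : Fin n, ∑ t : Fin n, PP k n ^ m * (gg k n s i j * gg k n t j i))
            = ∑ s : Fin n, ∑ t : Fin n, if s = t then (0 : EE k n) else cc := by
              refine Finset.sum_congr rfl fun s _ => Finset.sum_congr rfl fun t _ => ?_
              rw [hterm k n m hm i j s t, if_pos hij]
          _ = n • ((0 - cc) + n • cc) := by rw [double_ite_sum]; simp
      · rw [if_neg hij]
        calc (∑ s : Fin n, ∑ t : Fin n, PP k n ^ m * (gg k n s i j * gg k n t j i))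
            = ∑ s : Fin n, ∑ t : Fin n, if s = t then -cc else (0 : EE k n) := by
              refine Finset.sum_congr rfl fun s _ => Finset.sum_congr rfl fun t _ => ?_
              rw [hterm k n m hm i j s t, if_neg hij]
          _ = n • ((-cc - 0) + n • (0 : EE k n)) := by rw [double_ite_sum]; simp
    rw [Finset.sum_congr rfl fun i _ => Finset.sum_congr rfl fun j _ => hin i j]
    rw [double_ite_sum]
  have hk1 : 1 ≤ k := by
    rcases Nat.eq_zero_or_pos k with h | h
    · subst h; simp at hm
    · exact h
  rw [mul_sub, hA, hB, hcc]
  simp only [Fintype.card_fin, smul_smul, nsmul_eq_mul]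
  push_cast [Nat.cast_sub hk1]
  ring




lemma hP (k n : ℕ) : trPhi k n = valE k n (PP k n) := by
  rw [trPhi, PP, map_sum]
  simp only [ω, eE, valE_gg]
  rw [Fintype.sum_prod_type]
  exact Finset.sum_comm

lemma hT2 (k n : ℕ) : trPhi2 k n = valE k n (T2E k n) := by
  simp only [trPhi2, T2E, map_sum, map_mul, valE_gg, ω]

lemma hT (k n : ℕ) : T k n = valE k n (PiE k n) := by
  rw [T, PiE, Fintype.prod_prod_type]
  simp only [Fin.prod_univ_def]
  rw [map_list_prod, List.map_map]
  congr 1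
  apply List.map_congr_left
  intro s _
  show _ = valE k n (((List.finRange k).map fun i => eE k n (s, i)).prod)
  rw [map_list_prod, List.map_map]
  rfl


/-- `(tr Φ)^{kn−2} ∧ ((tr Φ)² − tr(Φ²)) = (kn−2)! · n(n+1)k(k−1) · T`,
i.e. `∫ (σ₁^∨)^{kN−k²−2} σ_{1,1}^∨ = ½(kN−k²−2)!(N−k)(N−k+1)k(k−1) ∏_{j<k} j!/∏_{j=N−k}^{N−1} j!`. -/
theorem tau2_eval (k N n : ℕ) (hk : 1 ≤ k) (hN : k < N) (hn : n = N - k)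
    (hkn : 2 ≤ k * n) :
    (trPhi k n) ^ (k * n - 2) * ((trPhi k n) ^ 2 - trPhi2 k n) =
      (((k * n - 2).factorial : ℝ) * (n : ℝ) * ((n : ℝ) + 1) * (k : ℝ) * ((k : ℝ) - 1)) •
        T k n := by
  set m := k * n - 2 with hmdef
  have hm : n * k = m + 2 := by rw [Nat.mul_comm]; omega
  rw [hP, hT2, hT, ← map_pow, ← map_pow, ← map_sub, ← map_mul, main_EE k n m hm,
    map_nsmul]
  rw [← Nat.cast_smul_eq_nsmul ℝ]
  congr 1
  push_cast [Nat.cast_sub hk]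
  ring
end
end

section
/- Let k, N be natural numbers with 1 ≤ k < N, n := N − k, and assume kn ≥ 4. Then in Λ(V): Σ_{i=1}^{k} Σ_{j=1}^{k} (tr Φ)^{kn−4} ∧ ω^{ii} ∧ ω^{ii} ∧ ω^{jj} ∧ ω^{jj} = (kn−4)! · k · n · [(n−1)(n−2)(n−3) + (k−1)·n·(n−1)²] · T. (This is the evaluation of Q₁ = Σ_{i,j} ∫Dψ (tr Φ)^{kN−k²−4} (ω^{ii} ω^{jj})².) -/
noncomputable section

namespace Q1aux

abbrev Idx (k n : ℕ) : Type := Fin n × Fin k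

variable (k n : ℕ)

/-- The commuting square-zero degree-2 elements `e_a = ψ_a ∧ ψ̄_a`. -/
def e (a : Idx k n) : ExteriorAlgebra ℝ (V k n) := ψ k n a.1 a.2 * ψb k n a.1 a.2

lemma iota_swap (x y : V k n) :
    ExteriorAlgebra.ι ℝ x * ExteriorAlgebra.ι ℝ y
      = -(ExteriorAlgebra.ι ℝ y * ExteriorAlgebra.ι ℝ x) :=
  eq_neg_iff_add_eq_zero.2 (ExteriorAlgebra.ι_add_mul_swap x y)

lemma pair_mul_iota (x y z : V k n) :
    (ExteriorAlgebra.ι ℝ x * ExteriorAlgebra.ι ℝ y) * ExteriorAlgebra.ι ℝ z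
      = ExteriorAlgebra.ι ℝ z * (ExteriorAlgebra.ι ℝ x * ExteriorAlgebra.ι ℝ y) := by
  rw [mul_assoc, iota_swap k n y z, mul_neg, ← mul_assoc, iota_swap k n x z, neg_mul, neg_neg,
    mul_assoc]

lemma pair_comm (x y z w : V k n) :
    (ExteriorAlgebra.ι ℝ x * ExteriorAlgebra.ι ℝ y)
        * (ExteriorAlgebra.ι ℝ z * ExteriorAlgebra.ι ℝ w)
      = (ExteriorAlgebra.ι ℝ z * ExteriorAlgebra.ι ℝ w)
        * (ExteriorAlgebra.ι ℝ x * ExteriorAlgebra.ι ℝ y) := by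
  rw [← mul_assoc, pair_mul_iota, mul_assoc, pair_mul_iota, ← mul_assoc]

lemma commute_e (a b : Idx k n) : Commute (e k n a) (e k n b) :=
  pair_comm k n _ _ _ _

lemma pair_sq (x y : V k n) :
    (ExteriorAlgebra.ι ℝ x * ExteriorAlgebra.ι ℝ y)
      * (ExteriorAlgebra.ι ℝ x * ExteriorAlgebra.ι ℝ y) = 0 := by
  rw [mul_assoc, ← mul_assoc (ExteriorAlgebra.ι ℝ y), iota_swap k n y x, neg_mul, mul_neg,
    mul_assoc, ExteriorAlgebra.ι_sq_zero, mul_zero, mul_zero, neg_zero]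

lemma e_sq (a : Idx k n) : e k n a * e k n a = 0 := pair_sq k n _ _

/-- Product of the `e`'s along a list. -/
def prodL (l : List (Idx k n)) : ExteriorAlgebra ℝ (V k n) := (l.map (e k n)).prod

lemma prodL_cons (a : Idx k n) (l : List (Idx k n)) :
    prodL k n (a :: l) = e k n a * prodL k n l := by simp [prodL]

lemma pc : ∀ l : List (Idx k n), (l.map (e k n)).Pairwise Commute
  | [] => List.Pairwise.nil
  | a :: l => by
    rw [List.map_cons, List.pairwise_cons]
    exact ⟨by rintro x hx; obtain ⟨b, -, rfl⟩ := List.mem_map.1 hx; exact commute_e k n a b,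
      pc l⟩

lemma prodL_perm {l l' : List (Idx k n)} (h : List.Perm l l') : prodL k n l = prodL k n l' :=
  (h.map (e k n)).prod_eq' (pc k n l)

lemma prodL_mem {a : Idx k n} {l : List (Idx k n)} (h : a ∈ l) :
    prodL k n l = e k n a * prodL k n (@List.erase _ instBEqOfDecidableEq l a) := by
  rw [prodL_perm k n (List.perm_cons_erase h), prodL_cons]
  congr 3
  exact lawful_beq_subsingleton _ _

lemma prodL_dup {l : List (Idx k n)} (h : ¬ l.Nodup) : prodL k n l = 0 := by
  induction l with
  | nil => simp at h
  | cons a l ih =>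
    rw [List.nodup_cons, not_and_or] at h
    rcases h with h | h
    · push_neg at h
      rw [prodL_cons, prodL_mem k n h, ← mul_assoc, e_sq, zero_mul]
    · rw [prodL_cons, ih h, mul_zero]

/-- The canonical enumeration of all the indices. -/
def fullL : List (Idx k n) := (List.finRange n).flatMap fun s => (List.finRange k).map fun j => (s, j)

lemma fullL_mem (a : Idx k n) : a ∈ fullL k n := by
  simp [fullL]

lemma fullL_nodup : (fullL k n).Nodup := by
  rw [fullL, List.nodup_flatMap]
  refine ⟨fun s _ => List.Nodup.map (fun j j' h => by simpa using h) (List.nodup_finRange k), ?_⟩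
  refine List.Pairwise.imp ?_ (List.nodup_finRange n)
  intro s s' hss
  simp only [Function.onFun, List.disjoint_left]
  rintro x hx hx'
  obtain ⟨j, -, rfl⟩ := List.mem_map.1 hx
  obtain ⟨j', -, h⟩ := List.mem_map.1 hx'
  exact hss (by simpa using (Prod.mk.injEq _ _ _ _ ▸ h.symm).1)

lemma T_eq : T k n = prodL k n (fullL k n) := by
  rw [T, prodL, fullL, List.map_flatMap, List.flatMap_def, List.prod_flatten, List.map_map]
  simp only [List.map_map]
  rfl

/-- A product over a list of length `k*n` is `T` when there are no duplicates, `0` otherwise. -/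
lemma prodL_eq (l : List (Idx k n)) (hl : l.length = k * n) :
    prodL k n l = if l.Nodup then T k n else 0 := by
  split_ifs with h
  · have hcard : Fintype.card (Idx k n) = k * n := by simp [mul_comm]
    have htf : l.toFinset = Finset.univ :=
      Finset.eq_univ_of_card _ (by rw [List.toFinset_card_of_nodup h, hl, hcard])
    have hmem : ∀ a : Idx k n, a ∈ l := fun a => by
      rw [← List.mem_toFinset, htf]; exact Finset.mem_univ a
    have hperm : List.Perm l (fullL k n) :=
      (List.perm_ext_iff_of_nodup h (fullL_nodup k n)).2
        (fun a => ⟨fun _ => fullL_mem k n a, fun _ => hmem a⟩)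
    rw [T_eq]
    exact prodL_perm k n hperm
  · exact prodL_dup k n h

/-- Multinomial expansion of the power of `∑ e_a`. -/
lemma pow_expand (p : ℕ) :
    (∑ a : Idx k n, e k n a) ^ p = ∑ g : Fin p → Idx k n, prodL k n (List.ofFn g) := by
  induction p with
  | zero => simp [prodL]
  | succ p ih =>
    rw [pow_succ', ih, Finset.mul_sum]
    rw [show (∑ g : Fin p → Idx k n, (∑ a : Idx k n, e k n a) * prodL k n (List.ofFn g))
        = ∑ g : Fin p → Idx k n, ∑ a : Idx k n, e k n a * prodL k n (List.ofFn g)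
      from Finset.sum_congr rfl fun g _ => Finset.sum_mul _ _ _]
    rw [Finset.sum_comm]
    exact ((Fintype.sum_equiv (Fin.consEquiv (fun _ : Fin (p + 1) => Idx k n)).symm _
        (fun q => e k n q.1 * prodL k n (List.ofFn q.2))
        (fun h => by simp [prodL, List.ofFn_succ]; rfl)).trans
      (Fintype.sum_prod_type _)).symm

lemma card_inj_fun (m : ℕ) (α : Type) [Fintype α] [DecidableEq α] :
    Fintype.card {f : Fin m → α // Function.Injective f} = (Fintype.card α).descFactorial m := by
  rw [Fintype.card_congr (Equiv.subtypeInjectiveEquivEmbedding (Fin m) α),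
    Fintype.card_embedding_eq, Fintype.card_fin]

/-- The master computation: `(∑ e)^{kn-4} e_a e_b e_c e_d`. -/
lemma master (hkn : 4 ≤ k * n) (a b c d : Idx k n) :
    (∑ x : Idx k n, e k n x) ^ (k * n - 4) * e k n a * e k n b * e k n c * e k n d
      = if ([a, b, c, d] : List (Idx k n)).Nodup
          then (k * n - 4).factorial • T k n else 0 := by
  classical
  set p := k * n - 4 with hp
  rw [pow_expand, Finset.sum_mul, Finset.sum_mul, Finset.sum_mul, Finset.sum_mul]
  have step : ∀ g : Fin p → Idx k n,
      prodL k n (List.ofFn g) * e k n a * e k n b * e k n c * e k n d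
        = if (List.ofFn g ++ [a, b, c, d]).Nodup then T k n else 0 := by
    intro g
    rw [← prodL_eq k n _ (by simp [List.length_ofFn]; omega)]
    simp [prodL, List.map_append, mul_assoc]
  simp only [step]
  by_cases h4 : ([a, b, c, d] : List (Idx k n)).Nodup
  · rw [if_pos h4]
    set P : (Fin p → Idx k n) → Prop :=
      fun g => Function.Injective g ∧ ∀ i, g i ∉ ([a, b, c, d] : List (Idx k n)) with hP
    have hcond : ∀ g : Fin p → Idx k n,
        (List.ofFn g ++ [a, b, c, d]).Nodup ↔ P g := by
      intro g
      rw [List.nodup_append, List.nodup_ofFn, hP]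
      simp [h4, List.disjoint_left, List.mem_ofFn]
    rw [show (∑ g : Fin p → Idx k n,
          if (List.ofFn g ++ [a, b, c, d]).Nodup then T k n else 0)
        = ∑ g : Fin p → Idx k n, if P g then T k n else 0
      from Finset.sum_congr rfl fun g _ => if_congr (hcond g) rfl rfl]
    rw [Finset.sum_ite, Finset.sum_const, Finset.sum_const_zero, add_zero]
    have hcardW : Fintype.card {x : Idx k n // x ∉ ([a, b, c, d] : List (Idx k n))} = p := by
      rw [Fintype.card_subtype_compl]
      have h1 : Fintype.card {x : Idx k n // x ∈ ([a, b, c, d] : List (Idx k n))}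
          = ([a, b, c, d] : List (Idx k n)).toFinset.card := by
        rw [Fintype.card_congr (Equiv.subtypeEquivRight
          (fun x => (List.mem_toFinset).symm))]
        exact Fintype.card_coe _
      rw [h1, List.toFinset_card_of_nodup h4]
      simp [hp, mul_comm]
    have hcard : (Finset.univ.filter P).card = p.factorial := by
      rw [← Fintype.card_subtype]
      have eqv : {g : Fin p → Idx k n // P g}
          ≃ {g : Fin p → {x : Idx k n // x ∉ ([a, b, c, d] : List (Idx k n))} //
              Function.Injective g} :=
        { toFun := fun g => ⟨fun i => ⟨g.1 i, g.2.2 i⟩,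
            fun i j hij => g.2.1 (congrArg Subtype.val hij)⟩
          invFun := fun g => ⟨fun i => (g.1 i).1,
            ⟨fun i j hij => g.2 (Subtype.ext hij), fun i => (g.1 i).2⟩⟩
          left_inv := fun g => rfl
          right_inv := fun g => rfl }
      rw [Fintype.card_congr eqv, card_inj_fun, hcardW, Nat.descFactorial_self]
    rw [hcard]
  · rw [if_neg h4]
    have : ∀ g : Fin p → Idx k n,
        ¬ (List.ofFn g ++ [a, b, c, d]).Nodup := by
      intro g hg
      exact h4 (List.Nodup.of_append_right hg)
    simp [this]

def pairEquiv (n : ℕ) :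
    {q : Fin n × Fin n // q.2 ≠ q.1} ≃ {f : Fin 2 → Fin n // Function.Injective f} where
  toFun q := ⟨![q.1.1, q.1.2], by
    obtain ⟨⟨s, t⟩, h⟩ := q
    intro i j hij
    fin_cases i <;> fin_cases j <;> simp_all <;> (first | exact h hij.symm | exact h hij)⟩
  invFun f := ⟨(f.1 0, f.1 1), fun h => (by decide : ¬ (1 : Fin 2) = 0) (f.2 h)⟩
  left_inv := by rintro ⟨⟨s, t⟩, h⟩; rfl
  right_inv := by rintro ⟨f, h⟩; ext i; fin_cases i <;> rfl

def quadEquiv (n : ℕ) :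
    {q : (Fin n × Fin n) × Fin n × Fin n //
        ([q.2.2, q.2.1, q.1.2, q.1.1] : List (Fin n)).Nodup}
      ≃ {f : Fin 4 → Fin n // Function.Injective f} where
  toFun q := ⟨![q.1.1.1, q.1.1.2, q.1.2.1, q.1.2.2], by
    obtain ⟨⟨⟨s, t⟩, x, y⟩, h⟩ := q
    simp only [List.nodup_cons, List.mem_cons, List.not_mem_nil, or_false,
      List.mem_singleton, List.nodup_nil, and_true, not_or] at h
    intro i j hij
    fin_cases i <;> fin_cases j <;> simp_all⟩
  invFun f := ⟨((f.1 0, f.1 1), (f.1 2, f.1 3)), by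
    have hne : ∀ i j : Fin 4, i ≠ j → f.1 i ≠ f.1 j := fun i j hij hf => hij (f.2 hf)
    simp only [List.nodup_cons, List.mem_cons, List.not_mem_nil, or_false,
      List.mem_singleton, List.nodup_nil, and_true, not_or]
    exact ⟨⟨hne 3 2 (by decide), hne 3 1 (by decide), hne 3 0 (by decide)⟩,
      ⟨hne 2 1 (by decide), hne 2 0 (by decide)⟩, ⟨hne 1 0 (by decide), not_false⟩⟩⟩
  left_inv := by rintro ⟨⟨⟨s, t⟩, x, y⟩, h⟩; rfl
  right_inv := by rintro ⟨f, h⟩; ext i; fin_cases i <;> rfl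

lemma count2 {M : Type} [AddCommMonoid M] (m : M) :
    (∑ s : Fin n, ∑ t : Fin n, if t ≠ s then m else 0) = n.descFactorial 2 • m := by
  classical
  have key : (∑ q : Fin n × Fin n, if q.2 ≠ q.1 then m else 0) = n.descFactorial 2 • m := by
    rw [Finset.sum_ite, Finset.sum_const, Finset.sum_const_zero, add_zero,
      ← Fintype.card_subtype, Fintype.card_congr (pairEquiv n), card_inj_fun,
      Fintype.card_fin]
  rw [← key, Fintype.sum_prod_type]

lemma count4 {M : Type} [AddCommMonoid M] (m : M) :
    (∑ s : Fin n, ∑ t : Fin n, ∑ x : Fin n, ∑ y : Fin n,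
        if ([y, x, t, s] : List (Fin n)).Nodup then m else 0)
      = n.descFactorial 4 • m := by
  classical
  have key : (∑ q : (Fin n × Fin n) × Fin n × Fin n,
      if ([q.2.2, q.2.1, q.1.2, q.1.1] : List (Fin n)).Nodup then m else 0)
      = n.descFactorial 4 • m := by
    rw [Finset.sum_ite, Finset.sum_const, Finset.sum_const_zero, add_zero,
      ← Fintype.card_subtype, Fintype.card_congr (quadEquiv n), card_inj_fun,
      Fintype.card_fin]
  rw [← key]
  simp only [Fintype.sum_prod_type]

lemma trPhi_eq : trPhi k n = ∑ a : Idx k n, e k n a := by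
  rw [trPhi, Fintype.sum_prod_type, Finset.sum_comm]
  rfl

lemma hω (i : Fin k) : ω k n i i = ∑ s : Fin n, e k n (s, i) := rfl

/-- The inner evaluation for fixed colours `i`, `j`. -/
lemma inner_eval (hkn : 4 ≤ k * n) (i j : Fin k) :
    trPhi k n ^ (k * n - 4) * ω k n i i * ω k n i i * ω k n j j * ω k n j j
      = (if i = j then n.descFactorial 4 else n.descFactorial 2 * n.descFactorial 2) •
          ((k * n - 4).factorial • T k n) := by
  set M := (k * n - 4).factorial • T k n with hM
  rw [trPhi_eq, hω k n i, hω k n j]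
  simp only [Finset.mul_sum, Finset.sum_mul]
  simp only [master k n hkn]
  rcases eq_or_ne i j with rfl | hij
  · rw [if_pos rfl]
    have hc : ∀ s t x y : Fin n,
        (if ([(s, i), (t, i), (x, i), (y, i)] : List (Idx k n)).Nodup then M else 0)
          = if ([s, t, x, y] : List (Fin n)).Nodup then M else 0 := by
      intro s t x y
      exact if_congr (by simp) rfl rfl
    simp only [← hM, hc]
    exact count4 n M
  · rw [if_neg hij]
    have hstep : ∀ y x : Fin n,
        (∑ t : Fin n, ∑ s : Fin n,
            if ([(s, i), (t, i), (x, j), (y, j)] : List (Idx k n)).Nodup then M else 0)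
          = if x ≠ y then n.descFactorial 2 • M else 0 := by
      intro y x
      by_cases hxy : x = y
      · rw [if_neg (by simp [hxy])]
        have : ∀ t s : Fin n,
            ¬ ([(s, i), (t, i), (x, j), (y, j)] : List (Idx k n)).Nodup := by
          intro t s h
          simp [hxy] at h
        simp only [this, if_false]
        simp
      · rw [if_pos hxy, ← count2 n M]
        refine Finset.sum_congr rfl fun t _ => Finset.sum_congr rfl fun s _ => ?_
        refine if_congr ?_ rfl rfl
        simp [hij, hxy]
    simp only [← hM, hstep]
    rw [count2 n (n.descFactorial 2 • M), smul_smul]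

lemma df4 (n : ℕ) : ((n.descFactorial 4 : ℕ) : ℝ)
    = (n : ℝ) * ((n : ℝ) - 1) * ((n : ℝ) - 2) * ((n : ℝ) - 3) := by
  rw [← descPochhammer_eval_eq_descFactorial ℝ n 4]
  simp [descPochhammer_succ_eval]

end Q1aux

/-- `∑_{i,j} (tr Φ)^{kn−4} ∧ ω^{ii} ∧ ω^{ii} ∧ ω^{jj} ∧ ω^{jj}
  = (kn−4)! · k · n · [(n−1)(n−2)(n−3) + (k−1)n(n−1)²] · T` (the term `Q₁`). -/
theorem Q1_eval (k N n : ℕ) (hk : 1 ≤ k) (hN : k < N) (hn : n = N - k)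
    (hkn : 4 ≤ k * n) :
    (∑ i : Fin k, ∑ j : Fin k,
        (trPhi k n) ^ (k * n - 4) * ω k n i i * ω k n i i * ω k n j j * ω k n j j) =
      (((k * n - 4).factorial : ℝ) * (k : ℝ) * (n : ℝ) *
        (((n : ℝ) - 1) * ((n : ℝ) - 2) * ((n : ℝ) - 3)
          + ((k : ℝ) - 1) * (n : ℝ) * ((n : ℝ) - 1) ^ 2)) • T k n := by
  classical
  set D4 := n.descFactorial 4 with hD4
  set D2 := n.descFactorial 2 with hD2
  set M := (k * n - 4).factorial • T k n with hM
  have h1 : (∑ i : Fin k, ∑ j : Fin k,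
      (trPhi k n) ^ (k * n - 4) * ω k n i i * ω k n i i * ω k n j j * ω k n j j)
      = ∑ i : Fin k, ∑ j : Fin k, (if i = j then D4 else D2 * D2) • M :=
    Finset.sum_congr rfl fun i _ => Finset.sum_congr rfl fun j _ =>
      Q1aux.inner_eval k n hkn i j
  have h2 : ∀ i : Fin k, (∑ j : Fin k, (if i = j then D4 else D2 * D2) • M)
      = (D4 + (k - 1) * (D2 * D2)) • M := by
    intro i
    rw [← Finset.sum_smul]
    congr 1
    rw [← Finset.add_sum_erase _ _ (Finset.mem_univ i), if_pos rfl]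
    congr 1
    rw [Finset.sum_congr rfl (fun j hj => if_neg fun h => (Finset.mem_erase.1 hj).1 h.symm),
      Finset.sum_const, Finset.card_erase_of_mem (Finset.mem_univ i), Finset.card_univ,
      Fintype.card_fin, smul_eq_mul]
  rw [h1]
  simp only [h2]
  rw [Finset.sum_const, Finset.card_univ, Fintype.card_fin, smul_smul, hM, smul_smul]
  have hcast : ((k * (D4 + (k - 1) * (D2 * D2)) * (k * n - 4).factorial : ℕ) : ℝ)
      = ((k * n - 4).factorial : ℝ) * (k : ℝ) * (n : ℝ) *
        (((n : ℝ) - 1) * ((n : ℝ) - 2) * ((n : ℝ) - 3)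
          + ((k : ℝ) - 1) * (n : ℝ) * ((n : ℝ) - 1) ^ 2) := by
    push_cast [hD4, hD2, Q1aux.df4, Nat.cast_descFactorial_two, Nat.cast_sub hk]
    ring
  rw [← hcast, Nat.cast_smul_eq_nsmul]
end
end

section
/- Let k, N be natural numbers with 1 ≤ k < N, n := N − k, and assume kn ≥ 4. Then in Λ(V): 2 · Σ_{m=1}^{k} Σ_{i ≠ j} (tr Φ)^{kn−4} ∧ ω^{mm} ∧ ω^{mm} ∧ ω^{ij} ∧ ω^{ji} = (kn−4)! · k · n · (k−1) · [−4(n−1)(n−2) − 2n(n−1)(k−2)] · T, where the inner sum is over ordered pairs (i,j) with 1 ≤ i, j ≤ k and i ≠ j. (This is the evaluation of Q₂ = 2 Σ_m Σ_{i≠j} ∫Dψ (tr Φ)^{kN−k²−4} (ω^{mm})² ω^{ij} ω^{ji}.) -/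
set_option synthInstance.maxHeartbeats 1000000
set_option maxHeartbeats 1000000

noncomputable section

namespace Q2aux

open ExteriorAlgebra Finset

variable {k n : ℕ}

abbrev E (k n : ℕ) := ExteriorAlgebra ℝ (V k n)

def X (s : Fin n) (i j : Fin k) : E k n := ψ k n s i * ψb k n s j

lemma sw (a b : V k n) : ι ℝ a * ι ℝ b = -(ι ℝ b * ι ℝ a) :=
  eq_neg_of_add_eq_zero_left (ι_add_mul_swap a b)

lemma sw' (a b : V k n) (z : E k n) : ι ℝ a * (ι ℝ b * z) = -(ι ℝ b * (ι ℝ a * z)) := by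
  rw [← mul_assoc, sw a b, neg_mul, mul_assoc]

lemma sq' (a : V k n) (z : E k n) : ι ℝ a * (ι ℝ a * z) = 0 := by
  rw [← mul_assoc, ι_sq_zero, zero_mul]

lemma key_comm (v1 v2 v3 v4 : V k n) :
    (ι ℝ v1 * ι ℝ v2) * (ι ℝ v3 * ι ℝ v4) = (ι ℝ v3 * ι ℝ v4) * (ι ℝ v1 * ι ℝ v2) := by
  simp only [mul_assoc]
  rw [sw' v2 v3, mul_neg, sw' v1 v3, neg_neg, sw v2 v4, mul_neg, mul_neg, sw' v1 v4,
    mul_neg, neg_neg]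

lemma key_zψ (v1 v2 v4 : V k n) :
    (ι ℝ v1 * ι ℝ v2) * (ι ℝ v1 * ι ℝ v4) = 0 := by
  simp only [mul_assoc]
  rw [sw' v2 v1, mul_neg, sq', neg_zero]

lemma key_zψb (v1 v2 v3 : V k n) :
    (ι ℝ v1 * ι ℝ v2) * (ι ℝ v3 * ι ℝ v2) = 0 := by
  simp only [mul_assoc]
  rw [sw v3 v2, mul_neg, sq', mul_neg, mul_zero, neg_zero]

lemma key_swap (a b c d : V k n) :
    (ι ℝ a * ι ℝ b) * (ι ℝ c * ι ℝ d) = -((ι ℝ a * ι ℝ d) * (ι ℝ c * ι ℝ b)) := by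
  simp only [mul_assoc]
  rw [sw' b c, mul_neg, sw b d, mul_neg, mul_neg, neg_neg, sw' c d, mul_neg]

lemma Xcomm (s t : Fin n) (i j a b : Fin k) : X s i j * X t a b = X t a b * X s i j :=
  key_comm _ _ _ _

lemma Xzψ (s : Fin n) (i j j' : Fin k) : X s i j * X s i j' = 0 := key_zψ _ _ _

lemma Xzψb (s : Fin n) (i i' j : Fin k) : X s i j * X s i' j = 0 := key_zψb _ _ _

lemma Xswap (s : Fin n) (i j : Fin k) : X s i j * X s j i = -(X s i i * X s j j) :=
  key_swap _ _ _ _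


variable (k n : ℕ)

def gens : Set (E k n) := Set.range (fun t : Fin n × Fin k × Fin k => X t.1 t.2.1 t.2.2)

abbrev Asub : Subalgebra ℝ (E k n) := Algebra.adjoin ℝ (gens k n)

instance : CommRing (Asub k n) :=
  Algebra.adjoinCommRingOfComm ℝ (by
    rintro a ⟨ta, rfl⟩ b ⟨tb, rfl⟩
    exact Xcomm _ _ _ _ _ _)

def XA {k n : ℕ} (s : Fin n) (i j : Fin k) : Asub k n :=
  ⟨X s i j, Algebra.subset_adjoin ⟨(s, i, j), rfl⟩⟩

def valA : Asub k n →+* E k n where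
  toFun := Subtype.val
  map_one' := rfl
  map_mul' _ _ := rfl
  map_zero' := rfl
  map_add' _ _ := rfl

variable {k n}

@[simp] lemma valA_XA (s : Fin n) (i j : Fin k) : valA k n (XA s i j) = X s i j := rfl

lemma XAinj {x y : Asub k n} (h : valA k n x = valA k n y) : x = y := Subtype.ext h

lemma XAzψ (s : Fin n) (i j j' : Fin k) : XA s i j * XA s i j' = 0 :=
  XAinj (by simpa using Xzψ s i j j')

lemma XAzψb (s : Fin n) (i i' j : Fin k) : XA s i j * XA s i' j = 0 :=
  XAinj (by simpa using Xzψb s i i' j)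

lemma XAswap (s : Fin n) (i j : Fin k) : XA s i j * XA s j i = -(XA s i i * XA s j j) :=
  XAinj (by simpa using Xswap s i j)

variable (k n)

def DA {k n : ℕ} (p : Fin n × Fin k) : Asub k n := XA p.1 p.2 p.2

def TA : Asub k n := ∏ p : Fin n × Fin k, DA p

def ωA (i j : Fin k) : Asub k n := ∑ s : Fin n, XA s i j

def trPhiA : Asub k n := ∑ p : Fin n × Fin k, DA p

variable {k n}

lemma DAsq (p : Fin n × Fin k) : DA (k:=k) (n:=n) p * DA p = 0 := XAzψ _ _ _ _


lemma valA_TA : valA k n (TA k n) = T k n := by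
  have h1 : TA k n = ((List.finRange n).map
      (fun s => ((List.finRange k).map (fun j => XA (k := k) s j j)).prod)).prod := by
    rw [TA, Fintype.prod_prod_type, Fin.prod_univ_def]
    congr 1
  rw [h1, map_list_prod, List.map_map, T]
  congr 1
  refine List.map_congr_left fun s _ => ?_
  simp only [Function.comp_apply, map_list_prod, List.map_map]
  rfl

lemma valA_ωA (i j : Fin k) : valA k n (ωA k n i j) = ω k n i j := by
  rw [ωA, map_sum]; rfl

lemma valA_trPhiA : valA k n (trPhiA k n) = trPhi k n := by
  rw [trPhiA, map_sum, trPhi]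
  simp only [ω]
  rw [Fintype.sum_prod_type]
  exact Finset.sum_comm

theorem pow_sum_sq_zero {ι R : Type*} [CommRing R] [Fintype ι] [DecidableEq ι]
    (x : ι → R) (h : ∀ i, x i * x i = 0) (m : ℕ) :
    (∑ i, x i) ^ m =
      m.factorial • ∑ S ∈ Finset.powersetCard m (Finset.univ : Finset ι), ∏ i ∈ S, x i := by
  classical
  have hxp : ∀ (i : ι) (t : ℕ), 2 ≤ t → x i ^ t = 0 := by
    intro i t ht
    obtain ⟨u, rfl⟩ := Nat.exists_eq_add_of_le ht
    rw [pow_add, pow_two, h, zero_mul]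
  rw [Finset.sum_pow_eq_sum_piAntidiag]
  set ind : Finset ι → (ι → ℕ) := fun S => fun i => if i ∈ S then 1 else 0 with hind
  set P := Finset.powersetCard m (Finset.univ : Finset ι) with hP
  set g : (ι → ℕ) → R := fun f => (Nat.multinomial Finset.univ f : R) * ∏ i, x i ^ f i with hg
  have hsum_ind : ∀ S : Finset ι, (∑ i, ind S i) = S.card := by
    intro S
    simp [ind, Finset.sum_ite_mem]
  have hmem : ∀ S ∈ P, ind S ∈ Finset.piAntidiag Finset.univ m := by
    intro S hS
    rw [hP, Finset.mem_powersetCard_univ] at hS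
    rw [Finset.mem_piAntidiag]
    exact ⟨by rw [hsum_ind, hS], fun i _ => Finset.mem_univ i⟩
  have hinj : ∀ S ∈ P, ∀ S' ∈ P, ind S = ind S' → S = S' := by
    intro S _ S' _ hSS'
    ext i
    have := congrFun hSS' i
    simp only [ind] at this
    by_cases h1 : i ∈ S <;> by_cases h2 : i ∈ S' <;> simp_all
  have hz : ∀ f ∈ Finset.piAntidiag Finset.univ m, f ∉ P.image ind → g f = 0 := by
    intro f hf hfim
    by_cases hbig : ∃ i, 2 ≤ f i
    · obtain ⟨i, hi⟩ := hbig
      rw [hg]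
      simp only
      rw [Finset.prod_eq_zero (Finset.mem_univ i) (hxp i _ hi), mul_zero]
    · exfalso
      push_neg at hbig
      apply hfim
      rw [Finset.mem_piAntidiag] at hf
      have hfeq : f = ind (Finset.univ.filter (fun i => f i = 1)) := by
        funext i
        have h1 : f i ≤ 1 := by have := hbig i; omega
        interval_cases hfi : f i <;> simp [ind, hfi]
      rw [Finset.mem_image]
      refine ⟨Finset.univ.filter (fun i => f i = 1), ?_, hfeq.symm⟩
      rw [hP, Finset.mem_powersetCard_univ]
      have : ∑ i, f i = m := hf.1
      rw [← this]
      rw [Finset.card_filter]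
      apply Finset.sum_congr rfl
      intro i _
      have h1 : f i ≤ 1 := by have := hbig i; omega
      interval_cases hfi : f i <;> simp [hfi]
  have hterm : ∀ S ∈ P, g (ind S) = m.factorial • ∏ i ∈ S, x i := by
    intro S hS
    rw [hP, Finset.mem_powersetCard_univ] at hS
    have hmult : Nat.multinomial Finset.univ (ind S) = m.factorial := by
      have hspec := Nat.multinomial_spec Finset.univ (ind S)
      have hone : (∏ i, (ind S i).factorial) = 1 := by
        apply Finset.prod_eq_one
        intro i _
        by_cases hi : i ∈ S <;> simp [ind, hi]
      rw [hone, one_mul] at hspec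
      rw [hspec, hsum_ind, hS]
    have hprod : (∏ i, x i ^ ind S i) = ∏ i ∈ S, x i := by
      have : ∀ i, x i ^ ind S i = if i ∈ S then x i else 1 := by
        intro i
        by_cases hi : i ∈ S <;> simp [ind, hi]
      rw [Finset.prod_congr rfl (fun i _ => this i), Finset.prod_ite_mem,
        Finset.univ_inter]
    rw [hg]
    simp only
    rw [hmult, hprod, nsmul_eq_mul]
  calc (∑ f ∈ Finset.piAntidiag Finset.univ m, g f)
      = ∑ f ∈ P.image ind, g f :=
        (Finset.sum_subset (Finset.image_subset_iff.2 hmem) hz).symm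
    _ = ∑ S ∈ P, g (ind S) := Finset.sum_image hinj
    _ = ∑ S ∈ P, m.factorial • ∏ i ∈ S, x i := Finset.sum_congr rfl hterm
    _ = m.factorial • ∑ S ∈ P, ∏ i ∈ S, x i := (Finset.smul_sum).symm


section generic
variable {R : Type*} [CommRing R] (p c d e f x y : R)

lemma gz_rest (h : x * y = 0) (z : R) : x * y * z = 0 := by rw [h, zero_mul]

lemma zC1 (h : x * y = 0) : x * p * y * d * e * f = 0 := by
  have : x * p * y * d * e * f = x * y * (p * d * e * f) := by ring
  rw [this, h, zero_mul]

lemma zC2 (h : x * y = 0) : x * p * c * y * e * f = 0 := by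
  have : x * p * c * y * e * f = x * y * (p * c * e * f) := by ring
  rw [this, h, zero_mul]

lemma zC3 (h : x * y = 0) : x * p * c * d * y * f = 0 := by
  have : x * p * c * d * y * f = x * y * (p * c * d * f) := by ring
  rw [this, h, zero_mul]

lemma zC4 (h : x * y = 0) : x * p * c * d * e * y = 0 := by
  have : x * p * c * d * e * y = x * y * (p * c * d * e) := by ring
  rw [this, h, zero_mul]

lemma zD12 (h : c * d = 0) : p * c * d * e * f = 0 := by
  have : p * c * d * e * f = c * d * (p * e * f) := by ring
  rw [this, h, zero_mul]

lemma zD13 (h : c * e = 0) : p * c * d * e * f = 0 := by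
  have : p * c * d * e * f = c * e * (p * d * f) := by ring
  rw [this, h, zero_mul]

lemma zD14 (h : c * f = 0) : p * c * d * e * f = 0 := by
  have : p * c * d * e * f = c * f * (p * d * e) := by ring
  rw [this, h, zero_mul]

lemma zD23 (h : d * e = 0) : p * c * d * e * f = 0 := by
  have : p * c * d * e * f = d * e * (p * c * f) := by ring
  rw [this, h, zero_mul]

lemma zD24 (h : d * f = 0) : p * c * d * e * f = 0 := by
  have : p * c * d * e * f = d * f * (p * c * e) := by ring
  rw [this, h, zero_mul]

lemma zD34 (h : e * f = 0) : p * c * d * e * f = 0 := by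
  have : p * c * d * e * f = e * f * (p * c * d) := by ring
  rw [this, h, zero_mul]

lemma zE12 (h : c * d = 0) : p * c * d * e = 0 := by
  have : p * c * d * e = c * d * (p * e) := by ring
  rw [this, h, zero_mul]

lemma zE13 (h : c * e = 0) : p * c * d * e = 0 := by
  have : p * c * d * e = c * e * (p * d) := by ring
  rw [this, h, zero_mul]

lemma zF1 (h : x * y = 0) : x * p * y * d * e = 0 := by
  have : x * p * y * d * e = x * y * (p * d * e) := by ring
  rw [this, h, zero_mul]

lemma zF2 (h : x * y = 0) : x * p * c * y * e = 0 := by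
  have : x * p * c * y * e = x * y * (p * c * e) := by ring
  rw [this, h, zero_mul]

lemma zF3 (h : x * y = 0) : x * p * c * d * y = 0 := by
  have : x * p * c * d * y = x * y * (p * c * d) := by ring
  rw [this, h, zero_mul]

lemma swap5 {e' f' : R} (h : e * f = -(e' * f')) :
    p * c * d * e * f = -(p * c * d * e' * f') := by
  rw [mul_assoc (p * c * d), h, mul_neg, ← mul_assoc]

end generic

@[simp] lemma DA_mk (s : Fin n) (i : Fin k) : DA (s, i) = XA s i i := rfl

lemma prod_DA_insert4 {q1 q2 q3 q4 : Fin n × Fin k}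
    (h12 : q1 ≠ q2) (h13 : q1 ≠ q3) (h14 : q1 ≠ q4) (h23 : q2 ≠ q3) (h24 : q2 ≠ q4)
    (h34 : q3 ≠ q4) :
    (∏ p ∈ ((Finset.univ : Finset (Fin n × Fin k)) \ {q1, q2, q3, q4}), DA p) *
      DA q1 * DA q2 * DA q3 * DA q4 = TA k n := by
  have hunion : ((Finset.univ : Finset (Fin n × Fin k)) \ {q1,q2,q3,q4}) ∪ {q1,q2,q3,q4}
      = Finset.univ := Finset.sdiff_union_of_subset (Finset.subset_univ _)
  have h4 : ∏ p ∈ ({q1,q2,q3,q4} : Finset (Fin n × Fin k)), DA p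
      = DA q1 * (DA q2 * (DA q3 * DA q4)) := by
    rw [Finset.prod_insert (by simp [h12, h13, h14]),
        Finset.prod_insert (by simp [h23, h24]),
        Finset.prod_insert (by simp [h34]), Finset.prod_singleton]
  rw [TA]
  conv_rhs => rw [← hunion, Finset.prod_union Finset.sdiff_disjoint, h4]
  simp only [← mul_assoc]

lemma Gsum (q1 q2 q3 q4 : Fin n × Fin k) (h34 : q3 ≠ q4) :
    (∑ S ∈ Finset.powersetCard (k*n-4) (Finset.univ : Finset (Fin n × Fin k)),
      (∏ p ∈ S, DA p) * DA q1 * DA q2 * DA q3 * DA q4)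
    = if q1 ≠ q2 ∧ q1 ≠ q3 ∧ q1 ≠ q4 ∧ q2 ≠ q3 ∧ q2 ≠ q4 then TA k n else 0 := by
  by_cases hd : q1 ≠ q2 ∧ q1 ≠ q3 ∧ q1 ≠ q4 ∧ q2 ≠ q3 ∧ q2 ≠ q4
  · obtain ⟨h12, h13, h14, h23, h24⟩ := hd
    rw [if_pos ⟨h12, h13, h14, h23, h24⟩]
    have hcard4 : ({q1,q2,q3,q4} : Finset (Fin n × Fin k)).card = 4 := by
      rw [Finset.card_insert_of_notMem (by simp [h12, h13, h14]),
          Finset.card_insert_of_notMem (by simp [h23, h24]),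
          Finset.card_insert_of_notMem (by simp [h34]), Finset.card_singleton]
    have hS0 : ((Finset.univ : Finset (Fin n × Fin k)) \ {q1,q2,q3,q4})
        ∈ Finset.powersetCard (k*n-4) Finset.univ := by
      rw [Finset.mem_powersetCard_univ, Finset.card_sdiff_of_subset (Finset.subset_univ _), hcard4,
        Finset.card_univ, Fintype.card_prod, Fintype.card_fin, Fintype.card_fin, Nat.mul_comm]
    rw [Finset.sum_eq_single_of_mem _ hS0]
    · exact prod_DA_insert4 h12 h13 h14 h23 h24 h34
    · intro S hS hne
      have hmemq : q1 ∈ S ∨ q2 ∈ S ∨ q3 ∈ S ∨ q4 ∈ S := by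
        by_contra hq
        push_neg at hq
        obtain ⟨n1, n2, n3, n4⟩ := hq
        apply hne
        apply Finset.eq_of_subset_of_card_le
        · intro x hx
          simp only [Finset.mem_sdiff, Finset.mem_univ, true_and, Finset.mem_insert,
            Finset.mem_singleton]
          push_neg
          exact ⟨fun h => n1 (h ▸ hx), fun h => n2 (h ▸ hx), fun h => n3 (h ▸ hx),
            fun h => n4 (h ▸ hx)⟩
        · rw [Finset.mem_powersetCard_univ] at hS
          rw [hS, Finset.card_sdiff_of_subset (Finset.subset_univ _), hcard4, Finset.card_univ,
            Fintype.card_prod, Fintype.card_fin, Fintype.card_fin, Nat.mul_comm]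
      rcases hmemq with hq | hq | hq | hq
      · rw [← Finset.mul_prod_erase _ _ hq]; exact zC1 _ _ _ _ _ _ (DAsq q1)
      · rw [← Finset.mul_prod_erase _ _ hq]; exact zC2 _ _ _ _ _ _ (DAsq q2)
      · rw [← Finset.mul_prod_erase _ _ hq]; exact zC3 _ _ _ _ _ _ (DAsq q3)
      · rw [← Finset.mul_prod_erase _ _ hq]; exact zC4 _ _ _ _ _ _ (DAsq q4)
  · rw [if_neg hd]
    apply Finset.sum_eq_zero
    intro S _
    by_cases e12 : q1 = q2
    · subst e12; exact zD12 _ _ _ _ _ (DAsq q1)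
    by_cases e13 : q1 = q3
    · subst e13; exact zD13 _ _ _ _ _ (DAsq q1)
    by_cases e14 : q1 = q4
    · subst e14; exact zD14 _ _ _ _ _ (DAsq q1)
    by_cases e23 : q2 = q3
    · subst e23; exact zD23 _ _ _ _ _ (DAsq q2)
    by_cases e24 : q2 = q4
    · subst e24; exact zD24 _ _ _ _ _ (DAsq q2)
    exact absurd ⟨e12, e13, e14, e23, e24⟩ hd


lemma vanish (hkn : 4 ≤ k * n) {i j : Fin k} (m : Fin k) (hij : i ≠ j)
    {s3 s4 : Fin n} (s1 s2 : Fin n) (h34 : s3 ≠ s4)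
    (S : Finset (Fin n × Fin k)) (hS : S ∈ Finset.powersetCard (k*n-4) Finset.univ) :
    (∏ p ∈ S, DA p) * XA s1 m m * XA s2 m m * XA s3 i j * XA s4 j i = 0 := by
  rw [Finset.mem_powersetCard_univ] at hS
  by_cases h1S : ((s1 : Fin n), m) ∈ S
  · rw [← Finset.mul_prod_erase _ _ h1S]; exact zC1 _ _ _ _ _ _ (XAzψ s1 m m m)
  by_cases h2S : ((s2 : Fin n), m) ∈ S
  · rw [← Finset.mul_prod_erase _ _ h2S]; exact zC2 _ _ _ _ _ _ (XAzψ s2 m m m)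
  by_cases h12 : s1 = s2
  · subst h12; exact zD12 _ _ _ _ _ (XAzψ s1 m m m)
  by_cases ha3S : ((s3 : Fin n), i) ∈ S
  · rw [← Finset.mul_prod_erase _ _ ha3S]; exact zC3 _ _ _ _ _ _ (XAzψ s3 i i j)
  by_cases ha31 : ((s3 : Fin n), i) = (s1, m)
  · rw [Prod.mk.injEq] at ha31; obtain ⟨rfl, rfl⟩ := ha31
    exact zD13 _ _ _ _ _ (XAzψ s3 i i j)
  by_cases ha32 : ((s3 : Fin n), i) = (s2, m)
  · rw [Prod.mk.injEq] at ha32; obtain ⟨rfl, rfl⟩ := ha32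
    exact zD23 _ _ _ _ _ (XAzψ s3 i i j)
  by_cases hb3S : ((s3 : Fin n), j) ∈ S
  · rw [← Finset.mul_prod_erase _ _ hb3S]; exact zC3 _ _ _ _ _ _ (XAzψb s3 j i j)
  by_cases hb31 : ((s3 : Fin n), j) = (s1, m)
  · rw [Prod.mk.injEq] at hb31; obtain ⟨rfl, rfl⟩ := hb31
    exact zD13 _ _ _ _ _ (XAzψb s3 j i j)
  by_cases hb32 : ((s3 : Fin n), j) = (s2, m)
  · rw [Prod.mk.injEq] at hb32; obtain ⟨rfl, rfl⟩ := hb32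
    exact zD23 _ _ _ _ _ (XAzψb s3 j i j)
  by_cases ha4S : ((s4 : Fin n), j) ∈ S
  · rw [← Finset.mul_prod_erase _ _ ha4S]; exact zC4 _ _ _ _ _ _ (XAzψ s4 j j i)
  by_cases ha41 : ((s4 : Fin n), j) = (s1, m)
  · rw [Prod.mk.injEq] at ha41; obtain ⟨rfl, rfl⟩ := ha41
    exact zD14 _ _ _ _ _ (XAzψ s4 j j i)
  by_cases ha42 : ((s4 : Fin n), j) = (s2, m)
  · rw [Prod.mk.injEq] at ha42; obtain ⟨rfl, rfl⟩ := ha42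
    exact zD24 _ _ _ _ _ (XAzψ s4 j j i)
  by_cases hb4S : ((s4 : Fin n), i) ∈ S
  · rw [← Finset.mul_prod_erase _ _ hb4S]; exact zC4 _ _ _ _ _ _ (XAzψb s4 i j i)
  by_cases hb41 : ((s4 : Fin n), i) = (s1, m)
  · rw [Prod.mk.injEq] at hb41; obtain ⟨rfl, rfl⟩ := hb41
    exact zD14 _ _ _ _ _ (XAzψb s4 i j i)
  by_cases hb42 : ((s4 : Fin n), i) = (s2, m)
  · rw [Prod.mk.injEq] at hb42; obtain ⟨rfl, rfl⟩ := hb42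
    exact zD24 _ _ _ _ _ (XAzψb s4 i j i)
  exfalso
  have hF6 : (insert ((s3 : Fin n), i) (insert (s3, j) (insert (s4, j) (insert (s4, i)
      (insert (s1, m) (insert (s2, m) S)))))).card = S.card + 6 := by
    rw [Finset.card_insert_of_notMem
          (by simp [Prod.mk.injEq, ha31, ha32, ha3S, hij, h34]),
        Finset.card_insert_of_notMem
          (by simp [Prod.mk.injEq, hb31, hb32, hb3S, h34]),
        Finset.card_insert_of_notMem
          (by simp [Prod.mk.injEq, ha41, ha42, ha4S, Ne.symm hij]),
        Finset.card_insert_of_notMem (by simp [Prod.mk.injEq, hb41, hb42, hb4S]),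
        Finset.card_insert_of_notMem (by simp [Prod.mk.injEq, h12, h1S]),
        Finset.card_insert_of_notMem h2S]
  have hle := Finset.card_le_univ (insert ((s3 : Fin n), i) (insert (s3, j) (insert (s4, j)
      (insert (s4, i) (insert (s1, m) (insert (s2, m) S))))))
  rw [hF6, hS, Fintype.card_prod, Fintype.card_fin, Fintype.card_fin,
    Nat.mul_comm n k] at hle
  revert hkn hle
  generalize k * n = a
  intro hkn hle
  omega


lemma inner_eval (hkn : 4 ≤ k * n) (m i j : Fin k) (hij : i ≠ j) (s1 s2 s3 s4 : Fin n) :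
    (∑ S ∈ Finset.powersetCard (k*n-4) (Finset.univ : Finset (Fin n × Fin k)),
      (∏ p ∈ S, DA p) * XA s1 m m * XA s2 m m * XA s3 i j * XA s4 j i)
    = if s3 = s4 ∧ s1 ≠ s2 ∧ ((s1 : Fin n), m) ≠ (s3, i) ∧ ((s1 : Fin n), m) ≠ (s3, j)
        ∧ ((s2 : Fin n), m) ≠ (s3, i) ∧ ((s2 : Fin n), m) ≠ (s3, j)
      then -(TA k n) else 0 := by
  by_cases h34 : s3 = s4
  · subst h34
    have hsw : ∀ S : Finset (Fin n × Fin k),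
        (∏ p ∈ S, DA p) * XA s1 m m * XA s2 m m * XA s3 i j * XA s3 j i
        = -((∏ p ∈ S, DA p) * DA (s1, m) * DA (s2, m) * DA (s3, i) * DA (s3, j)) :=
      fun S => swap5 _ _ _ _ _ (XAswap s3 i j)
    rw [Finset.sum_congr rfl (fun S _ => hsw S), Finset.sum_neg_distrib,
      Gsum (s1, m) (s2, m) (s3, i) (s3, j) (by simp [Prod.mk.injEq, hij])]
    split_ifs with hA hB hB
    · rfl
    · exact absurd ⟨rfl, fun h => hA.1 (by rw [h]), hA.2.1, hA.2.2.1, hA.2.2.2.1,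
        hA.2.2.2.2⟩ hB
    · exact absurd ⟨fun h => hB.2.1 (congrArg Prod.fst h), hB.2.2.1, hB.2.2.2.1,
        hB.2.2.2.2.1, hB.2.2.2.2.2⟩ hA
    · exact neg_zero
  · rw [if_neg (fun hc => h34 hc.1)]
    exact Finset.sum_eq_zero fun S hS => vanish hkn m hij s1 s2 h34 S hS

lemma card_ne_one (a : Fin n) :
    (Finset.univ.filter (fun s : Fin n => ¬ a = s)).card = n - 1 := by
  have h : Finset.univ.filter (fun s : Fin n => ¬ a = s) = Finset.univ \ {a} := by
    ext x; simp [eq_comm]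
  rw [h, Finset.card_sdiff_of_subset (Finset.subset_univ _), Finset.card_univ, Fintype.card_fin,
    Finset.card_singleton]

lemma card_ne_two {a b : Fin n} (hab : a ≠ b) :
    (Finset.univ.filter (fun s : Fin n => s ≠ a ∧ s ≠ b)).card = n - 2 := by
  have h : Finset.univ.filter (fun s : Fin n => s ≠ a ∧ s ≠ b) = Finset.univ \ {a, b} := by
    ext x; simp [not_or]
  rw [h, Finset.card_sdiff_of_subset (Finset.subset_univ _), Finset.card_univ, Fintype.card_fin]
  rw [Finset.card_insert_of_notMem (by simp [hab]), Finset.card_singleton]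

lemma countA (hn : True) :
    (∑ s1 : Fin n, ∑ s2 : Fin n, ∑ s3 : Fin n,
      if s1 ≠ s2 ∧ s3 ≠ s1 ∧ s3 ≠ s2 then (1:ℕ) else 0) = n * ((n-1) * (n-2)) := by
  have inner : ∀ s1 s2 : Fin n,
      (∑ s3 : Fin n, if s1 ≠ s2 ∧ s3 ≠ s1 ∧ s3 ≠ s2 then (1:ℕ) else 0)
      = if s1 = s2 then 0 else n - 2 := by
    intro s1 s2
    by_cases h : s1 = s2
    · simp [h]
    · rw [if_neg h]
      have hc : ∀ s3 : Fin n, (if s1 ≠ s2 ∧ s3 ≠ s1 ∧ s3 ≠ s2 then (1:ℕ) else 0)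
          = if s3 ≠ s1 ∧ s3 ≠ s2 then 1 else 0 := fun s3 => by simp [h]
      rw [Finset.sum_congr rfl (fun s3 _ => hc s3), ← Finset.card_filter, card_ne_two h]
  rw [Finset.sum_congr rfl (fun s1 _ => Finset.sum_congr rfl (fun s2 _ => inner s1 s2))]
  have mid : ∀ s1 : Fin n, (∑ s2 : Fin n, if s1 = s2 then (0:ℕ) else n - 2)
      = (n-1) * (n-2) := by
    intro s1
    rw [Finset.sum_ite, Finset.sum_const, Finset.sum_const, card_ne_one s1]
    simp
  rw [Finset.sum_congr rfl (fun s1 _ => mid s1), Finset.sum_const, Finset.card_univ,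
    Fintype.card_fin, smul_eq_mul]

lemma countB :
    (∑ s1 : Fin n, ∑ s2 : Fin n, ∑ s3 : Fin n,
      if s1 ≠ s2 then (1:ℕ) else 0) = n * ((n-1) * n) := by
  have inner : ∀ s1 s2 : Fin n,
      (∑ _s3 : Fin n, if s1 ≠ s2 then (1:ℕ) else 0) = if s1 = s2 then 0 else n := by
    intro s1 s2
    by_cases h : s1 = s2
    · simp [h]
    · simp [h, Finset.card_univ]
  rw [Finset.sum_congr rfl (fun s1 _ => Finset.sum_congr rfl (fun s2 _ => inner s1 s2))]
  have mid : ∀ s1 : Fin n, (∑ s2 : Fin n, if s1 = s2 then (0:ℕ) else n) = (n-1) * n := by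
    intro s1
    rw [Finset.sum_ite, Finset.sum_const, Finset.sum_const, card_ne_one s1]
    simp
  rw [Finset.sum_congr rfl (fun s1 _ => mid s1), Finset.sum_const, Finset.card_univ,
    Fintype.card_fin, smul_eq_mul]

lemma count_eval (m i j : Fin k) (hij : i ≠ j) :
    (∑ s1 : Fin n, ∑ s2 : Fin n, ∑ s3 : Fin n,
      if s1 ≠ s2 ∧ ((s1 : Fin n), m) ≠ (s3, i) ∧ ((s1 : Fin n), m) ≠ (s3, j)
          ∧ ((s2 : Fin n), m) ≠ (s3, i) ∧ ((s2 : Fin n), m) ≠ (s3, j) then (1:ℕ) else 0)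
    = if m = i ∨ m = j then n*(n-1)*(n-2) else n*n*(n-1) := by
  by_cases hmi : m = i
  · subst hmi
    rw [if_pos (Or.inl rfl)]
    have hcond : ∀ s1 s2 s3 : Fin n,
        (s1 ≠ s2 ∧ ((s1 : Fin n), m) ≠ (s3, m) ∧ ((s1 : Fin n), m) ≠ (s3, j)
          ∧ ((s2 : Fin n), m) ≠ (s3, m) ∧ ((s2 : Fin n), m) ≠ (s3, j))
        ↔ (s1 ≠ s2 ∧ s3 ≠ s1 ∧ s3 ≠ s2) := by
      intro s1 s2 s3
      constructor
      · rintro ⟨h1, h2, _, h4, _⟩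
        exact ⟨h1, fun h => h2 (by rw [h]), fun h => h4 (by rw [h])⟩
      · rintro ⟨h1, h2, h3⟩
        refine ⟨h1, ?_, ?_, ?_, ?_⟩ <;> intro h <;> simp only [Prod.mk.injEq] at h
        · exact h2 h.1.symm
        · exact hij h.2
        · exact h3 h.1.symm
        · exact hij h.2
    rw [Finset.sum_congr rfl (fun s1 _ => Finset.sum_congr rfl (fun s2 _ =>
      Finset.sum_congr rfl (fun s3 _ => if_congr (hcond s1 s2 s3) rfl rfl))), countA trivial]
    exact (mul_assoc _ _ _).symm
  by_cases hmj : m = j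
  · subst hmj
    rw [if_pos (Or.inr rfl)]
    have hcond : ∀ s1 s2 s3 : Fin n,
        (s1 ≠ s2 ∧ ((s1 : Fin n), m) ≠ (s3, i) ∧ ((s1 : Fin n), m) ≠ (s3, m)
          ∧ ((s2 : Fin n), m) ≠ (s3, i) ∧ ((s2 : Fin n), m) ≠ (s3, m))
        ↔ (s1 ≠ s2 ∧ s3 ≠ s1 ∧ s3 ≠ s2) := by
      intro s1 s2 s3
      constructor
      · rintro ⟨h1, _, h3, _, h5⟩
        exact ⟨h1, fun h => h3 (by rw [h]), fun h => h5 (by rw [h])⟩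
      · rintro ⟨h1, h2, h3⟩
        refine ⟨h1, ?_, ?_, ?_, ?_⟩ <;> intro h <;> simp only [Prod.mk.injEq] at h
        · exact hij h.2.symm
        · exact h2 h.1.symm
        · exact hij h.2.symm
        · exact h3 h.1.symm
    rw [Finset.sum_congr rfl (fun s1 _ => Finset.sum_congr rfl (fun s2 _ =>
      Finset.sum_congr rfl (fun s3 _ => if_congr (hcond s1 s2 s3) rfl rfl))), countA trivial]
    exact (mul_assoc _ _ _).symm
  · rw [if_neg (by tauto)]
    have hcond : ∀ s1 s2 s3 : Fin n,
        (s1 ≠ s2 ∧ ((s1 : Fin n), m) ≠ (s3, i) ∧ ((s1 : Fin n), m) ≠ (s3, j)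
          ∧ ((s2 : Fin n), m) ≠ (s3, i) ∧ ((s2 : Fin n), m) ≠ (s3, j))
        ↔ (s1 ≠ s2) := by
      intro s1 s2 s3
      constructor
      · exact fun h => h.1
      · intro h1
        refine ⟨h1, ?_, ?_, ?_, ?_⟩ <;> intro h <;> simp only [Prod.mk.injEq] at h
        · exact hmi h.2
        · exact hmj h.2
        · exact hmi h.2
        · exact hmj h.2
    rw [Finset.sum_congr rfl (fun s1 _ => Finset.sum_congr rfl (fun s2 _ =>
      Finset.sum_congr rfl (fun s3 _ => if_congr (hcond s1 s2 s3) rfl rfl))), countB]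
    ring


lemma sum_swap4 {M : Type*} [AddCommMonoid M] {α β γ δ : Type*}
    (A : Finset α) (B : Finset β) (C : Finset γ) (D : Finset δ)
    (f : α → β → γ → δ → M) :
    (∑ a ∈ A, ∑ b ∈ B, ∑ c ∈ C, ∑ d ∈ D, f a b c d)
    = ∑ b ∈ B, ∑ c ∈ C, ∑ d ∈ D, ∑ a ∈ A, f a b c d := by
  rw [Finset.sum_comm]
  refine Finset.sum_congr rfl fun b _ => ?_
  rw [Finset.sum_comm]
  refine Finset.sum_congr rfl fun c _ => ?_
  rw [Finset.sum_comm]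

lemma sum_comm3 {M : Type*} [AddCommMonoid M] {α β γ : Type*}
    (A : Finset α) (B : Finset β) (C : Finset γ) (f : α → β → γ → M) :
    (∑ c ∈ C, ∑ b ∈ B, ∑ a ∈ A, f a b c) = ∑ a ∈ A, ∑ b ∈ B, ∑ c ∈ C, f a b c := by
  rw [Finset.sum_comm]
  rw [Finset.sum_congr rfl fun b _ => Finset.sum_comm]
  rw [Finset.sum_comm]

lemma mainA (hkn : 4 ≤ k * n) (m i j : Fin k) (hij : i ≠ j) :
    trPhiA k n ^ (k*n-4) * ωA k n m m * ωA k n m m * ωA k n i j * ωA k n j i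
    = ((k*n-4).factorial *
        (if m = i ∨ m = j then n*(n-1)*(n-2) else n*n*(n-1))) • (-(TA k n)) := by
  have hs4 : ∀ s1 s2 s3 : Fin n, (∑ s4 : Fin n,
      if s3 = s4 ∧ s1 ≠ s2 ∧ ((s1 : Fin n), m) ≠ (s3, i) ∧ ((s1 : Fin n), m) ≠ (s3, j)
          ∧ ((s2 : Fin n), m) ≠ (s3, i) ∧ ((s2 : Fin n), m) ≠ (s3, j)
        then -(TA k n) else 0)
      = if s1 ≠ s2 ∧ ((s1 : Fin n), m) ≠ (s3, i) ∧ ((s1 : Fin n), m) ≠ (s3, j)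
          ∧ ((s2 : Fin n), m) ≠ (s3, i) ∧ ((s2 : Fin n), m) ≠ (s3, j)
        then -(TA k n) else 0 := by
    intro s1 s2 s3
    simp only [ite_and]
    rw [Finset.sum_ite_eq]
    simp
  rw [trPhiA, pow_sum_sq_zero DA DAsq]
  simp only [ωA, smul_mul_assoc, Finset.sum_mul, Finset.mul_sum]
  rw [sum_swap4]
  have collapse : ∀ s1 s2 s3 : Fin n,
      (∑ s4 : Fin n, (k*n-4).factorial •
        ∑ S ∈ Finset.powersetCard (k*n-4) (Finset.univ : Finset (Fin n × Fin k)),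
          (∏ p ∈ S, DA p) * XA s1 m m * XA s2 m m * XA s3 i j * XA s4 j i)
      = ((k*n-4).factorial *
          (if s1 ≠ s2 ∧ ((s1 : Fin n), m) ≠ (s3, i) ∧ ((s1 : Fin n), m) ≠ (s3, j)
              ∧ ((s2 : Fin n), m) ≠ (s3, i) ∧ ((s2 : Fin n), m) ≠ (s3, j)
            then (1:ℕ) else 0)) • -(TA k n) := by
    intro s1 s2 s3
    rw [← Finset.smul_sum,
      Finset.sum_congr rfl (fun s4 _ => inner_eval hkn m i j hij s1 s2 s3 s4),
      hs4 s1 s2 s3]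
    split_ifs <;> simp
  rw [Finset.sum_congr rfl (fun s3 _ => Finset.sum_congr rfl (fun s2 _ =>
    Finset.sum_congr rfl (fun s1 _ => collapse s1 s2 s3)))]
  rw [sum_comm3]
  simp only [← Finset.sum_smul]
  simp only [← Finset.mul_sum]
  rw [count_eval m i j hij]


lemma sum_rot3 {M : Type*} [AddCommMonoid M] {α β γ : Type*}
    (A : Finset α) (B : Finset β) (C : Finset γ) (f : α → β → γ → M) :
    (∑ a ∈ A, ∑ b ∈ B, ∑ c ∈ C, f a b c) = ∑ b ∈ B, ∑ c ∈ C, ∑ a ∈ A, f a b c := by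
  rw [Finset.sum_comm]
  exact Finset.sum_congr rfl fun b _ => Finset.sum_comm

lemma coef_m {i j : Fin k} (hij : i ≠ j) (A B : ℕ) :
    (∑ m : Fin k, if m = i ∨ m = j then A else B) = 2*A + (k-2)*B := by
  rw [Finset.sum_ite, Finset.sum_const, Finset.sum_const]
  have h1 : Finset.univ.filter (fun m : Fin k => m = i ∨ m = j) = {i, j} := by
    ext x; simp
  have hc1 : (Finset.univ.filter (fun m : Fin k => m = i ∨ m = j)).card = 2 := by
    rw [h1, Finset.card_insert_of_notMem (by simp [hij]), Finset.card_singleton]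
  have hc2 : (Finset.univ.filter (fun m : Fin k => ¬(m = i ∨ m = j))).card = k - 2 := by
    rw [Finset.filter_not, Finset.card_sdiff_of_subset (Finset.filter_subset _ _), hc1,
      Finset.card_univ, Fintype.card_fin]
  rw [hc1, hc2, smul_eq_mul, smul_eq_mul]

lemma sumA_eval (hkn : 4 ≤ k * n) :
    (∑ m : Fin k, ∑ i : Fin k, ∑ j : Fin k,
      if i = j then (0 : Asub k n) else
        trPhiA k n ^ (k*n-4) * ωA k n m m * ωA k n m m * ωA k n i j * ωA k n j i)
    = (k * ((k-1) * ((k*n-4).factorial *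
        (2*(n*(n-1)*(n-2)) + (k-2)*(n*n*(n-1)))))) • (-(TA k n)) := by
  have hpoint : ∀ m i j : Fin k,
      (if i = j then (0 : Asub k n) else
        trPhiA k n ^ (k*n-4) * ωA k n m m * ωA k n m m * ωA k n i j * ωA k n j i)
      = if i = j then 0 else
          (((k*n-4).factorial *
            (if m = i ∨ m = j then n*(n-1)*(n-2) else n*n*(n-1))) • (-(TA k n))) := by
    intro m i j
    by_cases h : i = j
    · rw [if_pos h, if_pos h]
    · rw [if_neg h, if_neg h]; exact mainA hkn m i j h
  rw [Finset.sum_congr rfl (fun m _ => Finset.sum_congr rfl (fun i _ =>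
    Finset.sum_congr rfl (fun j _ => hpoint m i j)))]
  rw [sum_rot3]
  have hm : ∀ i j : Fin k,
      (∑ m : Fin k, if i = j then (0 : Asub k n) else
        (((k*n-4).factorial *
          (if m = i ∨ m = j then n*(n-1)*(n-2) else n*n*(n-1))) • (-(TA k n))))
      = (if i = j then (0:ℕ) else ((k*n-4).factorial *
          (2*(n*(n-1)*(n-2)) + (k-2)*(n*n*(n-1))))) • (-(TA k n)) := by
    intro i j
    by_cases h : i = j
    · simp [h]
    · simp only [if_neg h]
      simp only [← Finset.sum_smul]
      congr 1
      rw [← Finset.mul_sum]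
      congr 1
      exact coef_m h _ _
  rw [Finset.sum_congr rfl (fun i _ => Finset.sum_congr rfl (fun j _ => hm i j))]
  simp only [← Finset.sum_smul]
  congr 1
  have hj : ∀ i : Fin k, (∑ j : Fin k, if i = j then (0:ℕ) else
      ((k*n-4).factorial * (2*(n*(n-1)*(n-2)) + (k-2)*(n*n*(n-1)))))
      = (k-1) * ((k*n-4).factorial * (2*(n*(n-1)*(n-2)) + (k-2)*(n*n*(n-1)))) := by
    intro i
    rw [Finset.sum_ite, Finset.sum_const, Finset.sum_const, card_ne_one i]
    simp
  rw [Finset.sum_congr rfl (fun i _ => hj i), Finset.sum_const, Finset.card_univ,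
    Fintype.card_fin, smul_eq_mul]

lemma sumE_eval (hkn : 4 ≤ k * n) :
    (∑ m : Fin k, ∑ i : Fin k, ∑ j : Fin k,
      if i = j then (0 : E k n) else
        trPhi k n ^ (k*n-4) * ω k n m m * ω k n m m * ω k n i j * ω k n j i)
    = (k * ((k-1) * ((k*n-4).factorial *
        (2*(n*(n-1)*(n-2)) + (k-2)*(n*n*(n-1)))))) • (-(T k n)) := by
  have h := congrArg (valA k n) (sumA_eval hkn)
  simp only [map_sum, map_nsmul, map_neg, valA_TA] at h
  simp only [apply_ite (valA k n), map_zero, map_mul, map_pow, valA_trPhiA, valA_ωA] at h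
  exact h

end Q2aux

/-- `2 ∑_m ∑_{i≠j} (tr Φ)^{kn−4} ∧ ω^{mm} ∧ ω^{mm} ∧ ω^{ij} ∧ ω^{ji}
  = (kn−4)! · k · n · (k−1) · [−4(n−1)(n−2) − 2n(n−1)(k−2)] · T` (the term `Q₂`). -/
theorem Q2_eval (k N n : ℕ) (hk : 1 ≤ k) (hN : k < N) (hn : n = N - k)
    (hkn : 4 ≤ k * n) :
    (2 : ℝ) • (∑ m : Fin k, ∑ i : Fin k, ∑ j : Fin k,
        if i = j then 0 else
          (trPhi k n) ^ (k * n - 4) * ω k n m m * ω k n m m * ω k n i j * ω k n j i) =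
      (((k * n - 4).factorial : ℝ) * (k : ℝ) * (n : ℝ) * ((k : ℝ) - 1) *
        (-4 * ((n : ℝ) - 1) * ((n : ℝ) - 2)
          - 2 * (n : ℝ) * ((n : ℝ) - 1) * ((k : ℝ) - 2))) • T k n := by
  have hn1 : 1 ≤ n := by omega
  rw [Q2aux.sumE_eval hkn, ← Nat.cast_smul_eq_nsmul ℝ, smul_smul, smul_neg, ← neg_smul]
  congr 1
  rcases Nat.lt_or_ge k 2 with hk2 | hk2
  · have hk1 : k = 1 := by omega
    subst hk1
    norm_num
  rcases Nat.lt_or_ge n 2 with hn2 | hn2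
  · have hne : n = 1 := by omega
    subst hne
    norm_num
  · have e1 : ((k - 1 : ℕ) : ℝ) = (k : ℝ) - 1 := by
      rw [Nat.cast_sub (by omega)]; norm_num
    have e2 : ((k - 2 : ℕ) : ℝ) = (k : ℝ) - 2 := by
      rw [Nat.cast_sub (by omega)]; norm_num
    have e3 : ((n - 1 : ℕ) : ℝ) = (n : ℝ) - 1 := by
      rw [Nat.cast_sub (by omega)]; norm_num
    have e4 : ((n - 2 : ℕ) : ℝ) = (n : ℝ) - 2 := by
      rw [Nat.cast_sub (by omega)]; norm_num
    push_cast [e1, e2, e3, e4]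
    ring
end
end
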